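/- arXiv:2007.04698 — 9 statements merged into one kernel-verified Lean document; each statement's English description precedes it below -/
import Mathlib

section
/- In a chordal graph G (a graph with no induced cycles of length at least 4), if C is a cycle in G and uv is an edge of C, then u and v have a common neighbor among the vertices of C. -/
open SimpleGraph

/-- A graph is chordal if every cycle of length at least 4 has a chord:
an edge between two vertices of the cycle that is not an edge of the cycle. -/
def Chordal {V : Type*} (G : SimpleGraph V) : Prop :=
  ∀ ⦃v : V⦄ (c : G.Walk v v), c.IsCycle → 4 ≤ c.length →
    ∃ x y, x ∈ c.support ∧ y ∈ c.support ∧ G.Adj x y ∧ s(x, y) ∉ c.edges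

/-- The underlying relation of the `k`-sun: `Sum.inr` vertices form the clique
`{y_1, …, y_k}`, `Sum.inl` vertices form the independent set `{x_1, …, x_k}`,
and `x_i` is adjacent exactly to `y_i` and `y_{(i mod k)+1}`. -/
def sunRel (k : ℕ) : (Fin k ⊕ Fin k) → (Fin k ⊕ Fin k) → Prop
  | Sum.inr _, Sum.inr _ => True
  | Sum.inl i, Sum.inr j => j.val = i.val ∨ j.val = (i.val + 1) % k
  | _, _ => False

/-- The `k`-sun graph. -/
def sunGraph (k : ℕ) : SimpleGraph (Fin k ⊕ Fin k) := SimpleGraph.fromRel (sunRel k)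

/-- A graph is strongly chordal if it is chordal and has no induced `k`-sun for `k ≥ 3`. -/
def StronglyChordal {V : Type*} (G : SimpleGraph V) : Prop :=
  Chordal G ∧ ∀ k, 3 ≤ k → IsEmpty (sunGraph k ↪g G)

/-- The graph obtained from `G` by adding a universal vertex (`none`). -/
def addUniversal {V : Type*} (G : SimpleGraph V) : SimpleGraph (Option V) :=
  SimpleGraph.fromRel (fun x y =>
    match x, y with
    | some a, some b => G.Adj a b
    | _, _ => True)

/-- The graph obtained from `G` by adding a true twin (`none`) of the vertex `u`. -/
def addTwin {V : Type*} (G : SimpleGraph V) (u : V) : SimpleGraph (Option V) :=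
  SimpleGraph.fromRel (fun x y =>
    match x, y with
    | some a, some b => G.Adj a b
    | none, some a => a = u ∨ G.Adj u a
    | some a, none => a = u ∨ G.Adj u a
    | none, none => False)

/-- A vertex is simplicial if its neighborhood is a clique. -/
def IsSimplicial {V : Type*} (G : SimpleGraph V) (v : V) : Prop :=
  ∀ ⦃a b : V⦄, G.Adj v a → G.Adj v b → a ≠ b → G.Adj a b

/-- `Q` is (the vertex set of) a connected component of `G − A`. -/
def IsCompOf {V : Type*} (G : SimpleGraph V) (A Q : Set V) : Prop :=
  Disjoint Q A ∧ (G.induce Q).Connected ∧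
    ∀ a ∈ Q, ∀ b, b ∉ A → G.Adj a b → b ∈ Q

/-- The set of neighbors of a vertex set `Q`: vertices outside `Q` adjacent to some
vertex of `Q`. -/
def setNbhd {V : Type*} (G : SimpleGraph V) (Q : Set V) : Set V :=
  {b | b ∉ Q ∧ ∃ a ∈ Q, G.Adj a b}

/-- A cycle `c` is extendable if there is a cycle whose vertex set consists of the
vertices of `c` together with exactly one additional vertex. -/
def CycleExtendable {V : Type*} (G : SimpleGraph V) {v : V} (c : G.Walk v v) : Prop :=
  ∃ (w : V) (u : V) (c' : G.Walk u u), c'.IsCycle ∧ w ∉ c.support ∧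
    ∀ y, y ∈ c'.support ↔ (y ∈ c.support ∨ y = w)
open SimpleGraph.Walk in
lemma closed_mem_tail {V : Type*} {G : SimpleGraph V} {v u : V} (c : G.Walk v v)
    (hc : 0 < c.length) (hu : u ∈ c.support) : u ∈ c.support.tail := by
  cases c with
  | nil => simp at hc
  | cons h p =>
    simp only [support_cons, List.tail_cons]
    rcases List.mem_cons.mp hu with rfl | hu
    · exact p.end_mem_support
    · simpa using hu

open SimpleGraph.Walk in
/-- splitting a cycle at an interior vertex gives two paths -/
lemma cycle_split_paths {V : Type*} [DecidableEq V] {G : SimpleGraph V} {x y : V} (d : G.Walk x x)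
    (hd : d.IsCycle) (hy : y ∈ d.support) (hxy : y ≠ x) :
    (d.takeUntil y hy).IsPath ∧ (d.dropUntil y hy).IsPath := by
  set p := d.takeUntil y hy with hp
  set q := d.dropUntil y hy with hq
  have hspec : p.append q = d := d.take_spec hy
  have hnodup : d.support.tail.Nodup := hd.2
  have hsupp : d.support = p.support ++ q.support.tail := by
    rw [← hspec, support_append]
  have htail : d.support.tail = p.support.tail ++ q.support.tail := by
    rw [hsupp, p.support_eq_cons]; rfl
  rw [htail, List.nodup_append] at hnodup
  obtain ⟨h1, h2, h3⟩ := hnodup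
  have hxq : x ∈ q.support.tail := by
    have : x ∈ q.support := q.end_mem_support
    rw [q.support_eq_cons] at this
    rcases List.mem_cons.mp this with h | h
    · exact absurd h.symm hxy
    · exact h
  have hyp : y ∈ p.support.tail := by
    have : y ∈ p.support := p.end_mem_support
    rw [p.support_eq_cons] at this
    rcases List.mem_cons.mp this with h | h
    · exact absurd h hxy
    · exact h
  constructor
  · refine ⟨hd.isTrail.takeUntil hy, ?_⟩
    rw [p.support_eq_cons]
    exact List.nodup_cons.mpr ⟨fun hx => h3 x hx x hxq rfl, h1⟩
  · refine ⟨hd.isTrail.dropUntil hy, ?_⟩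
    rw [q.support_eq_cons]
    exact List.nodup_cons.mpr ⟨fun hyq => h3 y hyp y hyq rfl, h2⟩

open SimpleGraph.Walk in
lemma triangle_case {V : Type*} {G : SimpleGraph V} {u : V} (d : G.Walk u u)
    (hdc : d.IsCycle) (hd3 : d.length = 3) (w : V) (hde : s(u, w) ∈ d.edges) :
    ∃ x ∈ d.support, G.Adj u x ∧ G.Adj w x := by
  cases d with
  | nil => simp at hd3
  | cons h1 d1 =>
    cases d1 with
    | nil => simp at hd3
    | cons h2 d2 =>
      cases d2 with
      | nil => simp at hd3
      | cons h3 d3 =>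
        cases d3 with
        | cons h4 d4 => simp [Walk.length_cons] at hd3
        | nil =>
          rename_i a b
          have hnd := hdc.2
          simp [Walk.support_cons] at hnd
          obtain ⟨⟨hab, hau⟩, hbu⟩ := hnd
          simp [Walk.edges_cons, Sym2.eq_iff] at hde
          rcases hde with (rfl | ⟨rfl, rfl⟩) | (⟨rfl, rfl⟩ | ⟨rfl, rfl⟩) | (⟨rfl, rfl⟩ | rfl)
          · exact ⟨b, by simp, h3.symm, h2⟩
          · exact absurd rfl hau
          · exact absurd rfl hau
          · exact absurd rfl hbu
          · exact absurd rfl hbu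
          · exact ⟨a, by simp, h1, h2.symm⟩

/-- In a chordal graph, the endpoints of any edge of a cycle have a common neighbor
among the vertices of the cycle. -/
theorem stmt0 {V : Type*} (G : SimpleGraph V) (hG : Chordal G)
    {v : V} (c : G.Walk v v) (hc : c.IsCycle) (u w : V) (huw : s(u, w) ∈ c.edges) :
    ∃ x ∈ c.support, G.Adj u x ∧ G.Adj w x := by
  classical
  suffices H : ∀ n : ℕ, ∀ (v : V) (c : G.Walk v v), c.length ≤ n → c.IsCycle →
      ∀ u w, s(u, w) ∈ c.edges → ∃ x ∈ c.support, G.Adj u x ∧ G.Adj w x from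
    H c.length v c le_rfl hc u w huw
  intro n
  induction n with
  | zero =>
    intro v c hl hc u w _
    have := hc.three_le_length; omega
  | succ n ih =>
    intro v c hl hc u w huw
    have h3le := hc.three_le_length
    -- general facts about rotating
    by_cases h4 : 4 ≤ c.length
    · -- chord case
      obtain ⟨x, y, hx, hy, hadj, hne⟩ := hG c hc h4
      have hcpos : 0 < c.length := by omega
      set d := c.rotate x hx with hdd
      have hdc : d.IsCycle := hc.rotate hx
      have hperm : d.edges ~r c.edges := c.rotate_edges x hx
      have hdlen : d.length = c.length := by
        have := hperm.perm.length_eq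
        simpa [Walk.length_edges] using this
      have hdpos : 0 < d.length := by omega
      have hsub : ∀ z, z ∈ d.support → z ∈ c.support := by
        intro z hz
        have h1 := (c.support_rotate x hx).perm.mem_iff.mp (closed_mem_tail d hdpos hz)
        rw [c.support_eq_cons]
        exact List.mem_cons_of_mem _ h1
      have hyd : y ∈ d.support := by
        have h1 : y ∈ c.support.tail := closed_mem_tail c hcpos hy
        have h2 := (c.support_rotate x hx).perm.mem_iff.mpr h1
        rw [d.support_eq_cons]
        exact List.mem_cons_of_mem _ h2
      have hchord : s(x, y) ∉ d.edges := fun h => hne (hperm.perm.mem_iff.mp h)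
      have hyx : y ≠ x := hadj.ne'
      obtain ⟨hp, hq⟩ := cycle_split_paths d hdc hyd hyx
      set p := d.takeUntil y hyd with hpp
      set q := d.dropUntil y hyd with hqq
      have hspec : p.append q = d := d.take_spec hyd
      have hlen : p.length + q.length = d.length := by
        rw [← hspec, Walk.length_append]
      have hedges : d.edges = p.edges ++ q.edges := by
        rw [← hspec, Walk.edges_append]
      have hpe : s(x, y) ∉ p.edges := fun h => hchord (hedges ▸ List.mem_append_left _ h)
      have hqe : s(x, y) ∉ q.edges := fun h => hchord (hedges ▸ List.mem_append_right _ h)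
      have hC1 : (Walk.cons hadj.symm p).IsCycle :=
        (Walk.cons_isCycle_iff p hadj.symm).mpr ⟨hp, by rwa [Sym2.eq_swap]⟩
      have hC2 : (Walk.cons hadj q).IsCycle :=
        (Walk.cons_isCycle_iff q hadj).mpr ⟨hq, hqe⟩
      have hl1 := hC1.three_le_length
      have hl2 := hC2.three_le_length
      simp only [Walk.length_cons] at hl1 hl2
      have huwd : s(u, w) ∈ d.edges := hperm.perm.mem_iff.mpr huw
      rw [hedges] at huwd
      rcases List.mem_append.mp huwd with hm | hm
      · obtain ⟨x', hx', hux', hwx'⟩ := ih y (Walk.cons hadj.symm p)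
          (by simp only [Walk.length_cons]; omega) hC1 u w
          (by simp only [Walk.edges_cons]; exact List.mem_cons_of_mem _ hm)
        refine ⟨x', ?_, hux', hwx'⟩
        simp only [Walk.support_cons] at hx'
        rcases List.mem_cons.mp hx' with rfl | hx'
        · exact hsub _ hyd
        · exact hsub _ (d.support_takeUntil_subset hyd hx')
      · obtain ⟨x', hx', hux', hwx'⟩ := ih x (Walk.cons hadj q)
          (by simp only [Walk.length_cons]; omega) hC2 u w
          (by simp only [Walk.edges_cons]; exact List.mem_cons_of_mem _ hm)
        refine ⟨x', ?_, hux', hwx'⟩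
        simp only [Walk.support_cons] at hx'
        rcases List.mem_cons.mp hx' with rfl | hx'
        · exact hx
        · exact hsub _ (d.support_dropUntil_subset hyd hx')
    · -- triangle case
      have h3 : c.length = 3 := by omega
      have hu : u ∈ c.support := c.fst_mem_support_of_mem_edges huw
      have hdc : (c.rotate u hu).IsCycle := hc.rotate hu
      have hperm : (c.rotate u hu).edges ~r c.edges := c.rotate_edges u hu
      have hdlen : (c.rotate u hu).length = 3 := by
        have := hperm.perm.length_eq
        simpa [Walk.length_edges, h3] using this
      obtain ⟨x', hx', hux', hwx'⟩ := triangle_case (c.rotate u hu) hdc hdlen w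
        (hperm.perm.mem_iff.mpr huw)
      refine ⟨x', ?_, hux', hwx'⟩
      have h1 := (c.support_rotate u hu).perm.mem_iff.mp
        (closed_mem_tail (c.rotate u hu) (by omega) hx')
      rw [c.support_eq_cons]
      exact List.mem_cons_of_mem _ h1
end

section
/- Adding a true twin of an existing vertex to a strongly chordal graph yields a strongly chordal graph. -/
open SimpleGraph

section WalkLemmas

variable {W : Type*} {H : SimpleGraph W}

lemma closed_nodup_nil {b : W} (p : H.Walk b b) (h : p.support.Nodup) : p = Walk.nil := by
  cases p with
  | nil => rfl
  | cons h' t =>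
    exfalso
    simp only [Walk.support_cons, List.nodup_cons] at h
    exact h.1 t.end_mem_support

lemma end_nbr_unique {a b : W} (p : H.Walk a b) (h : p.support.Nodup) :
    ∀ {z₁ z₂ : W}, s(b, z₁) ∈ p.edges → s(b, z₂) ∈ p.edges → z₁ = z₂ := by
  induction p with
  | nil => intro z₁ z₂ h1; simp at h1
  | @cons a d b hadj t ih =>
    intro z₁ z₂ h1 h2
    simp only [Walk.support_cons, List.nodup_cons] at h
    have key : ∀ z : W, s(b, z) ∈ (Walk.cons hadj t).edges → (b = d ∧ z = a) ∨ s(b,z) ∈ t.edges := by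
      intro z hz
      rw [Walk.edges_cons, List.mem_cons] at hz
      rcases hz with hz | hz
      · rw [Sym2.eq_iff] at hz
        rcases hz with ⟨hba, hzd⟩ | ⟨hbd, hza⟩
        · exact absurd (hba ▸ t.end_mem_support) h.1
        · exact Or.inl ⟨hbd, hza⟩
      · exact Or.inr hz
    rcases key z₁ h1 with ⟨hbd, hz1⟩ | h1' <;> rcases key z₂ h2 with ⟨hbd2, hz2⟩ | h2'
    · rw [hz1, hz2]
    · exfalso
      subst hbd
      have : t = Walk.nil := closed_nodup_nil t h.2
      subst this
      simp at h2'
    · exfalso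
      subst hbd2
      have : t = Walk.nil := closed_nodup_nil t h.2
      subst this
      simp at h1'
    · exact ih h.2 h1' h2'

lemma end_nbr_exists {a b : W} (p : H.Walk a b) (hp : ¬ p.Nil) :
    ∃ z, s(b, z) ∈ p.edges := by
  induction p with
  | nil => simp at hp
  | @cons a d b hadj t ih =>
    by_cases hn : t.Nil
    · have hdb : d = b := hn.eq
      subst hdb
      exact ⟨a, by simp [Sym2.eq_swap]⟩
    · obtain ⟨z, hz⟩ := ih hn
      exact ⟨z, by simp [hz]⟩

lemma edge_ends_length_one {a b : W} (p : H.Walk a b) (h : p.support.Nodup)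
    (he : s(a, b) ∈ p.edges) : p.length = 1 := by
  induction p with
  | nil => simp at he
  | @cons a d b hadj t ih =>
    simp only [Walk.support_cons, List.nodup_cons] at h
    rw [Walk.edges_cons, List.mem_cons] at he
    rcases he with he | he
    · rw [Sym2.eq_iff] at he
      rcases he with ⟨-, hbd⟩ | ⟨had, hba⟩
      · subst hbd
        have : t = Walk.nil := closed_nodup_nil t h.2
        subst this; simp
      · subst had; exact absurd (hba ▸ t.end_mem_support) h.1
    · exact absurd (t.fst_mem_support_of_mem_edges he) h.1

lemma closed_mem_support_tail {v : W} (p : H.Walk v v) (hp : ¬ p.Nil) {x : W} :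
    x ∈ p.support ↔ x ∈ p.support.tail := by
  constructor
  · intro hx
    rw [p.support_eq_cons, List.mem_cons] at hx
    rcases hx with rfl | hx
    · cases p with
      | nil => simp at hp
      | cons h' t => simpa using Or.inr t.end_mem_support
    · exact hx
  · intro hx
    rw [p.support_eq_cons]
    exact List.mem_cons_of_mem _ hx

lemma mem_support_rotate [DecidableEq W] {v x₀ : W} (c : H.Walk v v) (h : x₀ ∈ c.support)
    (hc : ¬ c.Nil) (hr : ¬ (c.rotate x₀ h).Nil) {x : W} :
    x ∈ (c.rotate x₀ h).support ↔ x ∈ c.support := by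
  rw [closed_mem_support_tail _ hr, closed_mem_support_tail _ hc,
    (Walk.support_rotate c x₀ h).mem_iff]

end WalkLemmas

section AddTwin

variable {V : Type*} {G : SimpleGraph V} {u : V}

lemma addTwin_adj_some {a b : V} : (addTwin G u).Adj (some a) (some b) ↔ G.Adj a b := by
  simp only [addTwin, fromRel_adj]
  constructor
  · rintro ⟨-, h | h⟩
    · exact h
    · exact h.symm
  · intro h
    exact ⟨by simpa using h.ne, Or.inl h⟩

lemma addTwin_adj_none_some {a : V} :
    (addTwin G u).Adj none (some a) ↔ (a = u ∨ G.Adj u a) := by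
  simp only [addTwin, fromRel_adj]
  constructor
  · rintro ⟨-, h | h⟩ <;> exact h
  · intro h; exact ⟨by simp, Or.inl h⟩

lemma addTwin_adj_none_u : (addTwin G u).Adj none (some u) :=
  addTwin_adj_none_some.2 (Or.inl rfl)

lemma addTwin_twin {w : Option V} (h1 : w ≠ none) (h2 : w ≠ some u) :
    ((addTwin G u).Adj none w ↔ (addTwin G u).Adj (some u) w) := by
  obtain ⟨a, rfl⟩ := Option.ne_none_iff_exists'.1 h1
  have hau : a ≠ u := fun h => h2 (by rw [h])
  rw [addTwin_adj_none_some, addTwin_adj_some]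
  simp [hau]

noncomputable def oswap (u : V) : Option V ≃ Option V :=
  letI := Classical.decEq V; Equiv.swap none (some u)

lemma oswap_none : oswap u none = some u := by
  letI := Classical.decEq V
  simp only [oswap]
  exact Equiv.swap_apply_left _ _

lemma oswap_some_u : oswap u (some u) = none := by
  letI := Classical.decEq V
  simp only [oswap]
  exact Equiv.swap_apply_right _ _

lemma oswap_other {x : Option V} (h1 : x ≠ none) (h2 : x ≠ some u) : oswap u x = x := by
  letI := Classical.decEq V
  simp only [oswap]
  exact Equiv.swap_apply_of_ne_of_ne h1 h2

lemma oswap_invol (x : Option V) : oswap u (oswap u x) = x := by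
  letI := Classical.decEq V
  simp only [oswap]
  exact Equiv.swap_apply_self _ _ _

noncomputable def twinSwap (G : SimpleGraph V) (u : V) : (addTwin G u) ≃g (addTwin G u) := by
  refine ⟨oswap u, ?_⟩
  have key : ∀ x y : Option V, (addTwin G u).Adj x y →
      (addTwin G u).Adj (oswap u x) (oswap u y) := by
    intro x y h
    by_cases hx1 : x = none <;> by_cases hy1 : y = none
    · subst hx1; subst hy1; exact absurd rfl h.ne
    · subst hx1
      by_cases hy2 : y = some u
      · subst hy2
        rw [oswap_none, oswap_some_u]
        exact addTwin_adj_none_u.symm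
      · rw [oswap_none, oswap_other hy1 hy2]
        exact (addTwin_twin hy1 hy2).1 h
    · subst hy1
      by_cases hx2 : x = some u
      · subst hx2
        rw [oswap_none, oswap_some_u]
        exact addTwin_adj_none_u
      · rw [oswap_none, oswap_other hx1 hx2]
        exact ((addTwin_twin hx1 hx2).1 h.symm).symm
    · by_cases hx2 : x = some u <;> by_cases hy2 : y = some u
      · subst hx2; subst hy2; exact absurd rfl h.ne
      · subst hx2
        rw [oswap_some_u, oswap_other hy1 hy2]
        exact (addTwin_twin hy1 hy2).2 h
      · subst hy2
        rw [oswap_some_u, oswap_other hx1 hx2]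
        exact ((addTwin_twin hx1 hx2).2 h.symm).symm
      · rw [oswap_other hx1 hx2, oswap_other hy1 hy2]
        exact h
  intro x y
  constructor
  · intro h
    have := key _ _ h
    rwa [oswap_invol, oswap_invol] at this
  · exact key x y

lemma pull : ∀ {x y : Option V} (p : (addTwin G u).Walk x y), none ∉ p.support →
    ∀ a b, x = some a → y = some b →
    ∃ q : G.Walk a b, p.support = q.support.map some ∧
      p.edges = q.edges.map (Sym2.map some) := by
  intro x y p
  induction p with
  | nil =>
    intro _ a b hx hy
    subst hx
    obtain rfl : a = b := by injection hy
    exact ⟨Walk.nil, by simp, by simp⟩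
  | @cons x w y hadj t ih =>
    intro hn a b hx hy
    simp only [Walk.support_cons, List.mem_cons] at hn
    push_neg at hn
    have hw : w ≠ none := fun h => hn.2 (h ▸ t.start_mem_support)
    obtain ⟨c, rfl⟩ := Option.ne_none_iff_exists'.1 hw
    subst hx
    have hac : G.Adj a c := addTwin_adj_some.1 hadj
    obtain ⟨q, hs, he⟩ := ih hn.2 c b rfl hy
    exact ⟨Walk.cons hac q, by simp [hs], by simp [he]⟩

/-- Case A: a cycle avoiding `none` has a chord. -/
lemma chordA (hG : Chordal G) {v : Option V} (c : (addTwin G u).Walk v v)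
    (hc : c.IsCycle) (hlen : 4 ≤ c.length) (hn : none ∉ c.support) :
    ∃ x y, x ∈ c.support ∧ y ∈ c.support ∧ (addTwin G u).Adj x y ∧ s(x, y) ∉ c.edges := by
  have hv : v ≠ none := fun h => hn (h ▸ c.start_mem_support)
  obtain ⟨a, rfl⟩ := Option.ne_none_iff_exists'.1 hv
  obtain ⟨q, hs, he⟩ := pull c hn a a rfl rfl
  have hlq : q.length = c.length := by
    have := congrArg List.length he
    simpa [Walk.length_edges] using this.symm
  have hq : q.IsCycle := by
    constructor
    constructor
    · constructor
      exact List.Nodup.of_map _ (he ▸ hc.edges_nodup)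
    · intro h
      subst h
      simp [← hlq] at hlen
    · have : c.support.tail = (q.support.tail).map some := by
        rw [hs]
        cases q.support with
        | nil => simp
        | cons hd tl => simp
      exact List.Nodup.of_map _ (this ▸ hc.support_nodup)
  obtain ⟨x, y, hx, hy, hadj, hne⟩ := hG q hq (hlq ▸ hlen)
  refine ⟨some x, some y, ?_, ?_, addTwin_adj_some.2 hadj, ?_⟩
  · rw [hs]; exact List.mem_map_of_mem hx
  · rw [hs]; exact List.mem_map_of_mem hy
  · rw [he]
    intro hmem
    obtain ⟨e, he1, he2⟩ := List.mem_map.1 hmem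
    have : e = s(x, y) := Sym2.map.injective (Option.some_injective V) (by simpa using he2)
    exact hne (this ▸ he1)

/-- Case B: a cycle through `none` avoiding `some u` has a chord. -/
lemma chordB (hG : Chordal G) {v : Option V} (c : (addTwin G u).Walk v v)
    (hc : c.IsCycle) (hlen : 4 ≤ c.length) (hsu : some u ∉ c.support) :
    ∃ x y, x ∈ c.support ∧ y ∈ c.support ∧ (addTwin G u).Adj x y ∧ s(x, y) ∉ c.edges := by
  set σ := twinSwap G u with hσ
  set f : (addTwin G u) →g (addTwin G u) := σ.toEmbedding.toHom with hf
  have hfeq : ∀ x, f x = oswap u x := fun x => rfl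
  have hinv : ∀ x, f (f x) = x := by
    intro x; rw [hfeq, hfeq]; exact oswap_invol x
  have hfinj : Function.Injective f := fun x y h => by
    have := congrArg f h; rwa [hinv, hinv] at this
  set c' := c.map f with hc'
  have hcyc' : c'.IsCycle := hc.map hfinj
  have hlen' : 4 ≤ c'.length := by rwa [hc', Walk.length_map]
  have hn' : none ∉ c'.support := by
    rw [hc', Walk.support_map]
    intro hmem
    obtain ⟨x, hx1, hx2⟩ := List.mem_map.1 hmem
    have : x = some u := by
      have := congrArg f hx2
      rw [hinv] at this
      rw [this, hfeq, oswap_none]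
    exact hsu (this ▸ hx1)
  obtain ⟨x, y, hx, hy, hadj, hne⟩ := chordA hG c' hcyc' hlen' hn'
  have hmemf : ∀ z, z ∈ c'.support → f z ∈ c.support := by
    intro z hz
    rw [hc', Walk.support_map] at hz
    obtain ⟨x', hx1', hx2'⟩ := List.mem_map.1 hz
    rw [← hx2', hinv]
    exact hx1'
  refine ⟨f x, f y, hmemf x hx, hmemf y hy, ?_, ?_⟩
  · have : (addTwin G u).Adj (σ x) (σ y) := σ.map_rel_iff.2 hadj
    exact this
  · intro hmem
    apply hne
    rw [hc', Walk.edges_map]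
    refine List.mem_map.2 ⟨s(f x, f y), hmem, ?_⟩
    rw [Sym2.map_pair_eq, hinv, hinv]

end AddTwin

section ChordC
variable {V : Type*} {G : SimpleGraph V} {u : V}

/-- Case C0: a cycle based at `none` using the edge `none`–`some u` has a chord. -/
lemma chordC0 (q : (addTwin G u).Walk (none : Option V) none) (hq : q.IsCycle)
    (hlen : 4 ≤ q.length) (hedge : s((none : Option V), some u) ∈ q.edges) :
    ∃ x y, x ∈ q.support ∧ y ∈ q.support ∧ (addTwin G u).Adj x y ∧ s(x, y) ∉ q.edges := by
  cases q with
  | nil => simp at hlen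
  | @cons _ w _ hadj t =>
    have hw_ne : w ≠ none := hadj.ne'
    have htn : t.support.Nodup := by
      have := hq.support_nodup
      simpa using this
    have htlen : 3 ≤ t.length := by
      simp only [Walk.length_cons] at hlen
      omega
    have htnil : ¬ t.Nil := by
      rw [Walk.nil_iff_length_eq]; omega
    have hsu_mem : (some u : Option V) ∈ (Walk.cons hadj t).support :=
      Walk.snd_mem_support_of_mem_edges _ hedge
    by_cases hwu : w = some u
    · subst hwu
      -- t : Walk (some u) none
      obtain ⟨z, hz⟩ := end_nbr_exists t htnil
      have hzadj : (addTwin G u).Adj none z := (t.edges_subset_edgeSet hz)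
      have hzn : z ≠ none := hzadj.ne'
      have hzu : z ≠ some u := by
        rintro rfl
        have h1 : s((some u : Option V), none) ∈ t.edges := by rwa [Sym2.eq_swap] at hz
        have := edge_ends_length_one t htn h1
        omega
      obtain ⟨aa, rfl⟩ := Option.ne_none_iff_exists'.1 hzn
      have hGua : G.Adj u aa := by
        rcases addTwin_adj_none_some.1 hzadj with h | h
        · exact absurd (congrArg some h) hzu
        · exact h
      refine ⟨some aa, some u, ?_, ?_, addTwin_adj_some.2 hGua.symm, ?_⟩
      · simp only [Walk.support_cons, List.mem_cons]
        exact Or.inr (t.snd_mem_support_of_mem_edges hz)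
      · exact hsu_mem
      · intro hmem
        rw [Walk.edges_cons, List.mem_cons] at hmem
        rcases hmem with hmem | hmem
        · rw [Sym2.eq_iff] at hmem
          rcases hmem with ⟨h1, -⟩ | ⟨-, h2⟩
          · exact Option.some_ne_none aa h1
          · exact Option.some_ne_none u h2
        · -- s(some aa, some u) ∈ t.edges, t : Walk (some u) none
          cases t with
          | @cons _ w2 _ hadj2 r =>
            -- uniqueness of the edge-neighbor of (some u), the start of t
            have hrev_nodup : (Walk.cons hadj2 r).reverse.support.Nodup := by
              rw [Walk.support_reverse]
              exact List.nodup_reverse.2 htn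
            have h1 : s((some u : Option V), some aa) ∈ (Walk.cons hadj2 r).reverse.edges := by
              rw [Walk.edges_reverse, List.mem_reverse, Sym2.eq_swap]
              exact hmem
            have h2 : s((some u : Option V), w2) ∈ (Walk.cons hadj2 r).reverse.edges := by
              rw [Walk.edges_reverse, List.mem_reverse]
              simp
            have hw2 : some aa = w2 := end_nbr_unique _ hrev_nodup h1 h2
            subst hw2
            -- now hz : s(none, some aa) ∈ (cons hadj2 r).edges
            rw [Walk.edges_cons, List.mem_cons] at hz
            rcases hz with hz | hz
            · rw [Sym2.eq_iff] at hz
              rcases hz with ⟨h1', -⟩ | ⟨h1', -⟩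
              · cases h1'
              · cases h1'
            · -- s(none, some aa) ∈ r.edges, r : Walk (some aa) none
              have hrn : r.support.Nodup := by
                simp only [Walk.support_cons, List.nodup_cons] at htn
                exact htn.2
              have : r.length = 1 := by
                apply edge_ends_length_one r hrn
                rwa [Sym2.eq_swap] at hz
              simp only [Walk.length_cons] at htlen
              omega
    · -- w ≠ some u
      have hedge' : s((none : Option V), some u) ∈ t.edges := by
        rw [Walk.edges_cons, List.mem_cons] at hedge
        rcases hedge with h | h
        · exfalso
          rw [Sym2.eq_iff] at h
          rcases h with ⟨-, h2⟩ | ⟨h1, -⟩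
          · exact hwu h2.symm
          · exact hw_ne h1.symm
        · exact h
      obtain ⟨aa, rfl⟩ := Option.ne_none_iff_exists'.1 hw_ne
      have hau : aa ≠ u := fun h => hwu (congrArg some h)
      have hGua : G.Adj u aa := by
        rcases addTwin_adj_none_some.1 hadj with h | h
        · exact absurd h hau
        · exact h
      refine ⟨some aa, some u, ?_, ?_, addTwin_adj_some.2 hGua.symm, ?_⟩
      · simp only [Walk.support_cons, List.mem_cons]
        exact Or.inr t.start_mem_support
      · exact hsu_mem
      · intro hmem
        rw [Walk.edges_cons, List.mem_cons] at hmem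
        rcases hmem with hmem | hmem
        · rw [Sym2.eq_iff] at hmem
          rcases hmem with ⟨h1, -⟩ | ⟨-, h2⟩
          · exact Option.some_ne_none aa h1
          · exact Option.some_ne_none u h2
        · -- s(some aa, some u) ∈ t.edges, t : Walk (some aa) none
          cases t with
          | @cons _ w2 _ hadj2 r =>
            have hrev_nodup : (Walk.cons hadj2 r).reverse.support.Nodup := by
              rw [Walk.support_reverse]
              exact List.nodup_reverse.2 htn
            have h1 : s((some aa : Option V), some u) ∈ (Walk.cons hadj2 r).reverse.edges := by
              rw [Walk.edges_reverse, List.mem_reverse]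
              exact hmem
            have h2 : s((some aa : Option V), w2) ∈ (Walk.cons hadj2 r).reverse.edges := by
              rw [Walk.edges_reverse, List.mem_reverse]
              simp
            have hw2 : some u = w2 := end_nbr_unique _ hrev_nodup h1 h2
            subst hw2
            rw [Walk.edges_cons, List.mem_cons] at hedge'
            rcases hedge' with hz | hz
            · rw [Sym2.eq_iff] at hz
              rcases hz with ⟨h1', -⟩ | ⟨h1', -⟩
              · cases h1'
              · cases h1'
            · have hrn : r.support.Nodup := by
                simp only [Walk.support_cons, List.nodup_cons] at htn
                exact htn.2
              have : r.length = 1 := by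
                apply edge_ends_length_one r hrn
                rwa [Sym2.eq_swap] at hz
              simp only [Walk.length_cons] at htlen
              omega

/-- Case C: a cycle through both `none` and `some u` has a chord. -/
lemma chordC {v : Option V} (c : (addTwin G u).Walk v v)
    (hc : c.IsCycle) (hlen : 4 ≤ c.length) (hnone : (none : Option V) ∈ c.support)
    (hsu : (some u : Option V) ∈ c.support) :
    ∃ x y, x ∈ c.support ∧ y ∈ c.support ∧ (addTwin G u).Adj x y ∧ s(x, y) ∉ c.edges := by
  classical
  by_cases hedge : s((none : Option V), some u) ∈ c.edges
  · have hcn : ¬ c.Nil := by rw [Walk.nil_iff_length_eq]; omega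
    set q := c.rotate none hnone with hqdef
    have hq : q.IsCycle := hc.rotate hnone
    have hE : ∀ e, e ∈ q.edges ↔ e ∈ c.edges := fun e => (Walk.rotate_edges c none hnone).mem_iff
    have hql : q.length = c.length := by
      rw [← Walk.length_edges, ← Walk.length_edges]
      exact (Walk.rotate_edges c none hnone).perm.length_eq
    have hqn : ¬ q.Nil := by rw [Walk.nil_iff_length_eq]; omega
    have hS : ∀ x : Option V, x ∈ q.support ↔ x ∈ c.support := fun x =>
      mem_support_rotate c hnone hcn hqn
    obtain ⟨x, y, hx, hy, hadj, hne⟩ := chordC0 q hq (by omega) ((hE _).2 hedge)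
    exact ⟨x, y, (hS x).1 hx, (hS y).1 hy, hadj, fun h => hne ((hE _).2 h)⟩
  · exact ⟨none, some u, hnone, hsu, addTwin_adj_none_u, hedge⟩

end ChordC

section Sun

lemma mod_succ_ne {k : ℕ} (hk : 3 ≤ k) (a : ℕ) : (a + 1) % k ≠ a % k := by
  intro h
  have : k ∣ (a + 1) - a := (Nat.modEq_iff_dvd' (Nat.le_add_right a 1)).1 h.symm
  simp at this
  omega

lemma mod_two_ne {k : ℕ} (hk : 3 ≤ k) (a : ℕ) : (a + 2) % k ≠ a % k := by
  intro h
  have : k ∣ (a + 2) - a := (Nat.modEq_iff_dvd' (Nat.le_add_right a 2)).1 h.symm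
  have h2 : (a + 2) - a = 2 := by omega
  rw [h2] at this
  have := Nat.le_of_dvd (by omega) this
  omega

variable {k : ℕ}

lemma sun_adj_inr_inr {i j : Fin k} :
    (sunGraph k).Adj (Sum.inr i) (Sum.inr j) ↔ i ≠ j := by
  simp only [sunGraph, fromRel_adj, sunRel]
  constructor
  · rintro ⟨h, -⟩ h'
    exact h (by rw [h'])
  · intro h
    exact ⟨fun h' => h (by injection h'), Or.inl trivial⟩

lemma sun_adj_inl_inr {i j : Fin k} :
    (sunGraph k).Adj (Sum.inl i) (Sum.inr j) ↔ (j.val = i.val ∨ j.val = (i.val + 1) % k) := by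
  simp only [sunGraph, fromRel_adj, sunRel]
  constructor
  · rintro ⟨-, h | h⟩
    · exact h
    · exact h.elim
  · intro h
    exact ⟨fun h' => (by cases h'), Or.inl h⟩

lemma sun_not_adj_inl_inl {i j : Fin k} : ¬ (sunGraph k).Adj (Sum.inl i) (Sum.inl j) := by
  simp only [sunGraph, fromRel_adj, sunRel]
  rintro ⟨-, h | h⟩ <;> exact h

lemma sun_no_twins_aux (hk : 3 ≤ k) (i j : Fin k)
    (hzw : (sunGraph k).Adj (Sum.inl i) (Sum.inr j))
    (htwin : ∀ t, t ≠ Sum.inl i → t ≠ Sum.inr j →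
      ((sunGraph k).Adj t (Sum.inl i) ↔ (sunGraph k).Adj t (Sum.inr j))) : False := by
  have hik : i.val < k := i.isLt
  set j' : Fin k := ⟨(i.val + 2) % k, Nat.mod_lt _ (by omega)⟩ with hj'
  have hne1 : j'.val ≠ i.val := by
    intro h
    apply mod_two_ne hk i.val
    rw [Nat.mod_eq_of_lt hik]
    exact h
  have hne2 : j'.val ≠ (i.val + 1) % k := by
    intro h
    exact mod_succ_ne hk (i.val + 1) (h ▸ rfl)
  have hj'j : j' ≠ j := by
    intro h
    rcases sun_adj_inl_inr.1 hzw with hj | hj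
    · exact hne1 (h ▸ hj : j'.val = i.val)
    · exact hne2 (h ▸ hj : j'.val = (i.val + 1) % k)
  have ht1 : (Sum.inr j' : Fin k ⊕ Fin k) ≠ Sum.inl i := fun h => by cases h
  have ht2 : (Sum.inr j' : Fin k ⊕ Fin k) ≠ Sum.inr j := fun h => hj'j (by injection h)
  have hadj : (sunGraph k).Adj (Sum.inr j') (Sum.inr j) := sun_adj_inr_inr.2 hj'j
  have := (htwin _ ht1 ht2).2 hadj
  have := sun_adj_inl_inr.1 this.symm
  rcases this with h | h
  · exact hne1 h
  · exact hne2 h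

lemma sun_no_twins (hk : 3 ≤ k) (z w : Fin k ⊕ Fin k) (hne : z ≠ w)
    (hzw : (sunGraph k).Adj z w)
    (htwin : ∀ t, t ≠ z → t ≠ w → ((sunGraph k).Adj t z ↔ (sunGraph k).Adj t w)) : False := by
  match z, w with
  | Sum.inl i, Sum.inl j => exact sun_not_adj_inl_inl hzw
  | Sum.inl i, Sum.inr j => exact sun_no_twins_aux hk i j hzw htwin
  | Sum.inr j, Sum.inl i =>
    exact sun_no_twins_aux hk i j hzw.symm (fun t h1 h2 => (htwin t h2 h1).symm)
  | Sum.inr j, Sum.inr j' =>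
    have hjj' : j ≠ j' := fun h => hne (by rw [h])
    by_cases hc : j'.val = (j.val + 1) % k
    · have ht1 : (Sum.inl j' : Fin k ⊕ Fin k) ≠ Sum.inr j := fun h => by cases h
      have ht2 : (Sum.inl j' : Fin k ⊕ Fin k) ≠ Sum.inr j' := fun h => by cases h
      have hadj : (sunGraph k).Adj (Sum.inl j') (Sum.inr j') := sun_adj_inl_inr.2 (Or.inl rfl)
      have := (htwin _ ht1 ht2).2 hadj
      rcases sun_adj_inl_inr.1 this with h | h
      · exact hjj' (Fin.val_injective h.symm).symm
      · rw [hc, Nat.mod_add_mod] at h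
        apply mod_two_ne hk j.val
        rw [Nat.mod_eq_of_lt j.isLt]
        exact h.symm
    · have ht1 : (Sum.inl j : Fin k ⊕ Fin k) ≠ Sum.inr j := fun h => by cases h
      have ht2 : (Sum.inl j : Fin k ⊕ Fin k) ≠ Sum.inr j' := fun h => by cases h
      have hadj : (sunGraph k).Adj (Sum.inl j) (Sum.inr j) := sun_adj_inl_inr.2 (Or.inl rfl)
      have := (htwin _ ht1 ht2).1 hadj
      rcases sun_adj_inl_inr.1 this with h | h
      · exact hjj' (Fin.val_injective h).symm
      · exact hc h

variable {V : Type*} {G : SimpleGraph V} {u : V}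

lemma sun_key (hG : IsEmpty (sunGraph k ↪g G)) (φ : sunGraph k ↪g addTwin G u)
    (hn : ∀ x, φ x ≠ none) : False := by
  have hsome : ∀ x, (φ x).isSome := fun x => Option.isSome_iff_ne_none.2 (hn x)
  set g : (Fin k ⊕ Fin k) → V := fun x => (φ x).get (hsome x) with hg
  have hgs : ∀ x, some (g x) = φ x := fun x => Option.some_get (hsome x)
  refine hG.elim ⟨⟨g, fun x y h => ?_⟩, ?_⟩
  · apply φ.injective
    rw [← hgs, ← hgs, h]
  · intro a b
    show G.Adj (g a) (g b) ↔ _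
    rw [← addTwin_adj_some (G := G) (u := u), hgs, hgs]
    exact φ.map_rel_iff
lemma sun_main (hG : IsEmpty (sunGraph k ↪g G)) (hk : 3 ≤ k) :
    IsEmpty (sunGraph k ↪g addTwin G u) := by
  constructor
  intro φ
  by_cases hn : ∀ x, φ x ≠ none
  · exact sun_key hG φ hn
  · push_neg at hn
    obtain ⟨z, hz⟩ := hn
    by_cases hs : ∀ x, φ x ≠ some u
    · -- compose with the twin swap
      set ψ := ((twinSwap G u).toEmbedding).comp φ with hψ
      apply sun_key hG ψ
      intro x h
      have hx : ψ x = oswap u (φ x) := rfl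
      rw [hx] at h
      have := congrArg (oswap u) h
      rw [oswap_invol, oswap_none] at this
      exact hs x this
    · push_neg at hs
      obtain ⟨w, hw⟩ := hs
      have hzw : z ≠ w := by
        intro h
        rw [h, hw] at hz
        cases hz
      have hadj : (sunGraph k).Adj z w := by
        rw [← φ.map_rel_iff, hz, hw]
        exact addTwin_adj_none_u
      refine sun_no_twins hk z w hzw hadj ?_
      intro t ht1 ht2
      have h1 : φ t ≠ none := fun h => ht1 (φ.injective (h.trans hz.symm))
      have h2 : φ t ≠ some u := fun h => ht2 (φ.injective (h.trans hw.symm))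
      rw [← φ.map_rel_iff (a := t) (b := z), ← φ.map_rel_iff (a := t) (b := w), hz, hw]
      rw [adj_comm _ (φ t) none, adj_comm _ (φ t) (some u)]
      exact addTwin_twin h1 h2

end Sun

/-- Adding a true twin of an existing vertex to a strongly chordal graph yields a
strongly chordal graph. -/
theorem stmt2 {V : Type*} (G : SimpleGraph V) (u : V) (hG : StronglyChordal G) :
    StronglyChordal (addTwin G u) := by
  obtain ⟨hchord, hsun⟩ := hG
  constructor
  · intro v c hc hlen
    by_cases hn : (none : Option V) ∈ c.support
    · by_cases hs : (some u : Option V) ∈ c.support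
      · exact chordC c hc hlen hn hs
      · exact chordB hchord c hc hlen hs
    · exact chordA hchord c hc hlen hn
  · intro k hk
    exact sun_main (hsun k hk) hk
end

section
/- If G is a Hamiltonian graph with at least 3 vertices and G' is obtained from G by adding a true twin of some vertex u of G, then G' is Hamiltonian. -/
open SimpleGraph

lemma countAuxFull {V : Type*} [DecidableEq V] (l : List V) (b : Option V) :
    @List.count (Option V) instBEqOfDecidableEq b (l.map some ++ [none]) =
      Option.rec 1 (fun v => l.count v) b := by
  have hbeq : ∀ x y : Option V, (@BEq.beq _ instBEqOfDecidableEq x y) = decide (x = y) :=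
    fun _ _ => rfl
  have hbeqV : ∀ x y : V, (@BEq.beq _ instBEqOfDecidableEq x y) = decide (x = y) :=
    fun _ _ => rfl
  induction l with
  | nil =>
    cases b with
    | none => simp [List.count_cons, hbeq]
    | some v => simp [List.count_cons, hbeq]
  | cons a l ih =>
    simp only [List.map_cons, List.cons_append, List.count_cons, ih]
    cases b with
    | none => simp [hbeq]
    | some v =>
      by_cases h : a = v <;> simp [hbeq, hbeqV, h]

/-- Adding a true twin of a vertex to a Hamiltonian graph with at least 3 vertices
yields a Hamiltonian graph. -/
theorem stmt4 {V : Type*} [Fintype V] [DecidableEq V] (G : SimpleGraph V) (u : V)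
    (hcard : 3 ≤ Fintype.card V) (hG : G.IsHamiltonian) :
    (addTwin G u).IsHamiltonian := by
  intro _
  obtain ⟨a, p, hp⟩ := hG (by omega)
  have hu : u ∈ p.support := hp.mem_support u
  have hp' : (p.rotate u hu).IsHamiltonianCycle := by
    rw [Walk.isHamiltonianCycle_iff_isCycle_and_support_count_tail_eq_one]
    refine ⟨hp.isCycle.rotate hu, fun b => ?_⟩
    rw [(Walk.support_rotate p u hu).perm.count_eq]
    exact (Walk.isHamiltonianCycle_iff_isCycle_and_support_count_tail_eq_one.1 hp).2 b
  generalize p.rotate u hu = p' at hp'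
  cases p' with
  | nil => exact absurd rfl hp'.isCycle.ne_nil
  | @cons _ x _ hadj q =>
    have hcount : ∀ b, q.support.count b = 1 := by
      intro b
      have := (Walk.isHamiltonianCycle_iff_isCycle_and_support_count_tail_eq_one.1 hp').2 b
      simpa using this
    have hxu : x ≠ u := hadj.ne'
    have hqnd : q.support.Nodup :=
      List.nodup_iff_count_le_one.2 fun b => le_of_eq (hcount b)
    have fadj : ∀ {a b : V}, G.Adj a b → (addTwin G u).Adj (some a) (some b) := by
      intro a b hab
      exact ⟨by simpa using hab.ne, Or.inl hab⟩
    let f : G →g addTwin G u := ⟨some, fadj⟩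
    have e1 : (addTwin G u).Adj none (some x) := ⟨by simp, Or.inl (Or.inr hadj)⟩
    have e2 : (addTwin G u).Adj (some u) none := ⟨by simp, Or.inl (Or.inl rfl)⟩
    refine ⟨none, Walk.cons e1 ((q.map f).concat e2), ?_⟩
    have hsupp : ((q.map f).concat e2).support = q.support.map some ++ [none] := by
      rw [Walk.support_concat, Walk.support_map]
      congr 1
    rw [Walk.isHamiltonianCycle_iff_isCycle_and_support_count_tail_eq_one]
    constructor
    · rw [Walk.cons_isCycle_iff]
      constructor
      · refine Walk.IsPath.mk' ?_
        rw [hsupp]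
        simp only [List.nodup_append, List.nodup_cons, List.nodup_nil, and_true,
          List.not_mem_nil, not_false_iff, List.mem_singleton]
        refine ⟨hqnd.map (Option.some_injective V), by simp, ?_⟩
        intro y hy
        simp only [List.mem_map] at hy
        obtain ⟨z, _, hz⟩ := hy
        simp [← hz]
      · intro hmem
        rw [Walk.edges_concat] at hmem
        rw [List.concat_eq_append] at hmem
        rcases List.mem_append.1 hmem with h | h
        · have := Walk.fst_mem_support_of_mem_edges _ h
          rw [Walk.support_map] at this
          simp [f] at this
        · rw [List.mem_singleton] at h
          simp only [Sym2.eq_iff] at h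
          rcases h with ⟨h1, _⟩ | ⟨_, h2⟩
          · exact absurd (h1 : none = some u) (by simp)
          · exact hxu (Option.some_injective V h2)
    · intro b
      simp only [Walk.support_cons, List.tail_cons, hsupp]
      rw [countAuxFull q.support b]
      cases b with
      | none => rfl
      | some v => exact hcount v
end

section
/- Let G be a connected chordal graph and S a clique of G such that G − S is disconnected. Then every connected component of G − S contains a simplicial vertex of G. -/
open SimpleGraph

section Aux
variable {V : Type*} {G : SimpleGraph V}

lemma aux_reachIn {D : Set V} {u v : ↥D}
    (h : (G.induce D).Reachable u v) :
    ∃ w : G.Walk u.val v.val, ∀ z ∈ w.support, z ∈ D := by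
  obtain ⟨w⟩ := h
  refine ⟨w.map (SimpleGraph.Hom.comap _ G), ?_⟩
  intro z hz
  erw [SimpleGraph.Walk.support_map] at hz
  obtain ⟨⟨z', hz'⟩, _, rfl⟩ := List.mem_map.mp hz
  exact hz'

lemma aux_liftReach {D : Set V} :
    ∀ {u v : V} (w : G.Walk u v) (hs : ∀ z ∈ w.support, z ∈ D),
      (G.induce D).Reachable ⟨u, hs u w.start_mem_support⟩ ⟨v, hs v w.end_mem_support⟩ := by
  intro u v w
  induction w with
  | nil => intro hs; rfl
  | @cons u x v h p ih =>
    intro hs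
    have hs' : ∀ z ∈ p.support, z ∈ D := fun z hz => hs z (by simp [hz])
    exact (Adj.reachable (by exact h : (G.induce D).Adj ⟨u, _⟩ ⟨x, _⟩)).trans (ih hs')

lemma aux_connected_insert {D : Set V} (hD : (G.induce D).Connected) {d t : V}
    (hd : d ∈ D) (ht : G.Adj d t) : (G.induce (insert t D)).Connected := by
  rw [connected_iff]
  refine ⟨?_, ⟨⟨t, Set.mem_insert t D⟩⟩⟩
  have hdm : d ∈ insert t D := Set.mem_insert_of_mem _ hd
  have key : ∀ x : ↥(insert t D), (G.induce (insert t D)).Reachable x ⟨d, hdm⟩ := by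
    rintro ⟨x, hx⟩
    rcases hx with hxt | hxD
    · have hadj : G.Adj x d := hxt ▸ ht.symm
      exact Adj.reachable (by exact hadj : (G.induce (insert t D)).Adj ⟨x, _⟩ ⟨d, hdm⟩)
    · have := hD.preconnected ⟨x, hxD⟩ ⟨d, hd⟩
      obtain ⟨w, hw⟩ := aux_reachIn this
      have hw' : ∀ z ∈ w.support, z ∈ insert t D := fun z hz => Set.mem_insert_of_mem _ (hw z hz)
      exact aux_liftReach w hw'
  exact fun x y => (key x).trans (key y).symm

lemma aux_escape {C : Set V} :
    ∀ {u v : V} (w : G.Walk u v), u ∈ C → v ∉ C → ∃ q ∈ w.support, q ∈ setNbhd G C := by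
  intro u v w
  induction w with
  | nil => intro hu hv; exact absurd hu hv
  | @cons u x v h p ih =>
    intro hu hv
    by_cases hx : x ∈ C
    · obtain ⟨q, hq, hqN⟩ := ih hx hv
      exact ⟨q, by simp [hq], hqN⟩
    · exact ⟨x, by simp, hx, u, hu, h⟩

lemma aux_shortcut [DecidableEq V] :
    ∀ {u v : V} (p : G.Walk u v), p.IsPath → ∀ x y, x ∈ p.support → y ∈ p.support →
      G.Adj x y → s(x, y) ∉ p.edges →
      ∃ q : G.Walk u v, q.length < p.length ∧ ∀ z ∈ q.support, z ∈ p.support := by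
  intro u v p
  induction p with
  | nil =>
    intro _ x y hx hy hxy _
    simp only [SimpleGraph.Walk.support_nil, List.mem_singleton] at hx hy
    subst hx; subst hy; exact absurd hxy (G.irrefl)
  | @cons u w v h p' ih =>
    intro hp x y hx hy hxy hE
    have hp' : p'.IsPath := hp.of_cons
    have hu : u ∉ p'.support := (SimpleGraph.Walk.cons_isPath_iff _ _ |>.mp hp).2
    simp only [SimpleGraph.Walk.support_cons, List.mem_cons] at hx hy
    have hEc : s(x, y) ≠ s(u, w) ∧ s(x, y) ∉ p'.edges := by
      rw [SimpleGraph.Walk.edges_cons, List.mem_cons] at hE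
      exact ⟨fun hh => hE (Or.inl hh), fun hh => hE (Or.inr hh)⟩
    -- the special case: one endpoint is u, other in p'.support
    have special : ∀ z, G.Adj u z → z ∈ p'.support → s(u, z) ∉ p'.edges → s(z, u) ≠ s(u, w) →
        ∃ q : G.Walk u v, q.length < (SimpleGraph.Walk.cons h p').length ∧
          ∀ t ∈ q.support, t ∈ (SimpleGraph.Walk.cons h p').support := by
      intro z hz hzs _ hne
      have hzw : z ≠ w := by
        rintro rfl
        exact hne (Sym2.eq_swap)
      refine ⟨SimpleGraph.Walk.cons hz (p'.dropUntil z hzs), ?_, ?_⟩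
      · have hsum := congrArg SimpleGraph.Walk.length (p'.take_spec hzs)
        rw [SimpleGraph.Walk.length_append] at hsum
        have htk : 1 ≤ (p'.takeUntil z hzs).length := by
          rcases Nat.eq_zero_or_pos (p'.takeUntil z hzs).length with h0 | h1
          · exact absurd (SimpleGraph.Walk.eq_of_length_eq_zero h0).symm hzw
          · exact h1
        simp only [SimpleGraph.Walk.length_cons]
        omega
      · intro t htq
        simp only [SimpleGraph.Walk.support_cons, List.mem_cons] at htq ⊢
        rcases htq with rfl | htq
        · exact Or.inl rfl
        · exact Or.inr (SimpleGraph.Walk.support_dropUntil_subset _ hzs htq)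
    rcases hx with rfl | hx
    · rcases hy with rfl | hy
      · exact absurd hxy (G.irrefl)
      · exact special y hxy hy hEc.2 (by rw [Sym2.eq_swap]; exact hEc.1)
    · rcases hy with rfl | hy
      · refine special x hxy.symm hx ?_ ?_
        · rw [Sym2.eq_swap]; exact hEc.2
        · intro hh; exact hEc.1 hh
      · obtain ⟨q', hq'len, hq'sup⟩ := ih hp' x y hx hy hxy hEc.2
        refine ⟨SimpleGraph.Walk.cons h q', by simp [SimpleGraph.Walk.length_cons]; omega, ?_⟩
        intro t htq
        simp only [SimpleGraph.Walk.support_cons, List.mem_cons] at htq ⊢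
        exact htq.imp id (hq'sup t)

end Aux

section Key
variable {V : Type*} {G : SimpleGraph V}

lemma aux_nbhd_clique (hch : Chordal G) {C : Set V} (hconn : (G.induce C).Connected)
    {b : V} (hb1 : b ∉ C) (hb2 : b ∉ setNbhd G C) (hb3 : ∀ t ∈ setNbhd G C, G.Adj b t) :
    G.IsClique (setNbhd G C) := by
  classical
  intro t1 ht1 t2 ht2 hne
  by_contra hnadj
  obtain ⟨ht1C, c1, hc1, hadj1⟩ := ht1
  obtain ⟨ht2C, c2, hc2, hadj2⟩ := ht2
  have hbnb : ∀ a ∈ C, ¬ G.Adj a b := fun a ha hab => hb2 ⟨hb1, a, ha, hab⟩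
  have habt1 : G.Adj b t1 := hb3 t1 ⟨ht1C, c1, hc1, hadj1⟩
  have habt2 : G.Adj b t2 := hb3 t2 ⟨ht2C, c2, hc2, hadj2⟩
  -- family of walks from t1 to t2 with support in C ∪ {t1, t2}
  set F : G.Walk t1 t2 → Prop :=
    fun p => ∀ z ∈ p.support, z ∈ C ∨ z = t1 ∨ z = t2 with hF
  -- initial walk
  obtain ⟨w0, hw0⟩ := aux_reachIn (hconn.preconnected ⟨c1, hc1⟩ ⟨c2, hc2⟩)
  have hinit : F (SimpleGraph.Walk.cons hadj1.symm
      (w0.append (SimpleGraph.Walk.cons hadj2 SimpleGraph.Walk.nil))) := by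
    intro z hz
    simp only [SimpleGraph.Walk.support_cons, SimpleGraph.Walk.support_append,
      SimpleGraph.Walk.support_cons, SimpleGraph.Walk.support_nil, List.tail_cons,
      List.mem_cons, List.mem_append, List.mem_singleton] at hz
    rcases hz with rfl | hz | (rfl | hf)
    · exact Or.inr (Or.inl rfl)
    · exact Or.inl (hw0 z hz)
    · exact Or.inr (Or.inr rfl)
    · exact absurd hf List.not_mem_nil
  -- minimal length walk in family
  set K : Set ℕ := {n | ∃ p : G.Walk t1 t2, F p ∧ p.length = n} with hK
  have hKne : K.Nonempty := ⟨_, _, hinit, rfl⟩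
  obtain ⟨p0, hp0F, hp0len⟩ := Nat.sInf_mem hKne
  set P : G.Walk t1 t2 := p0.bypass with hPdef
  have hPpath : P.IsPath := p0.bypass_isPath
  have hPF : F P := fun z hz => hp0F z (p0.support_bypass_subset hz)
  have hmin : ∀ q : G.Walk t1 t2, F q → P.length ≤ q.length := by
    intro q hq
    calc P.length ≤ p0.length := p0.length_bypass_le
    _ = sInf K := hp0len
    _ ≤ q.length := Nat.sInf_le ⟨q, hq, rfl⟩
  have hbt1 : b ≠ t1 := habt1.ne
  have hbt2 : b ≠ t2 := habt2.ne
  have hbP : b ∉ P.support := by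
    intro hb
    rcases hPF b hb with h | h | h
    · exact hb1 h
    · exact hbt1 h
    · exact hbt2 h
  have hlen2 : 2 ≤ P.length := by
    rcases Nat.lt_or_ge P.length 2 with hl | hl
    · have : P.length = 0 ∨ P.length = 1 := by omega
      rcases this with h | h
      · exact (hne (SimpleGraph.Walk.eq_of_length_eq_zero h)).elim
      · exact (hnadj (SimpleGraph.Walk.adj_of_length_eq_one h)).elim
    · exact hl
  -- the cycle
  set c : G.Walk t1 t1 := P.append (SimpleGraph.Walk.cons habt2.symm
      (SimpleGraph.Walk.cons habt1 SimpleGraph.Walk.nil)) with hcdef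
  have hcsupp : c.support = P.support ++ [b, t1] := by
    rw [hcdef, SimpleGraph.Walk.support_append]
    simp
  have hcedges : c.edges = P.edges ++ [s(t2, b), s(b, t1)] := by
    rw [hcdef, SimpleGraph.Walk.edges_append]
    simp
  have hclen : c.length = P.length + 2 := by
    rw [hcdef, SimpleGraph.Walk.length_append]
    simp
  have ht1tail : t1 ∉ P.support.tail := by
    have := hPpath.support_nodup
    rw [P.support_eq_cons] at this
    exact (List.nodup_cons.mp this).1
  have hcyc : c.IsCycle := by
    rw [SimpleGraph.Walk.isCycle_def]
    refine ⟨⟨?_⟩, ?_, ?_⟩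
    · -- edges nodup
      rw [hcedges, List.nodup_append]
      refine ⟨hPpath.isTrail.edges_nodup, ?_, ?_⟩
      · simp only [List.nodup_cons, List.mem_singleton, List.not_mem_nil, not_false_iff,
          List.nodup_nil, and_true]
        intro hh
        rw [Sym2.eq_iff] at hh
        rcases hh with ⟨h1, h2⟩ | ⟨h1, h2⟩
        · exact hbt2 h1.symm
        · exact hne h1.symm
      · intro e he
        simp only [List.mem_cons, List.mem_singleton, List.not_mem_nil]
        rintro f (rfl | rfl | hf) rfl
        · exact hbP (SimpleGraph.Walk.snd_mem_support_of_mem_edges P he)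
        · exact hbP (SimpleGraph.Walk.fst_mem_support_of_mem_edges P he)
        · exact hf
    · -- c ≠ nil
      intro hnil
      have := congrArg SimpleGraph.Walk.length hnil
      rw [hclen] at this
      simp at this
    · -- support tail nodup
      have htail : c.support.tail = P.support.tail ++ [b, t1] := by
        rw [hcsupp, P.support_eq_cons]
        simp
      rw [htail, List.nodup_append]
      refine ⟨hPpath.support_nodup.tail, ?_, ?_⟩
      · simp [hbt1]
      · intro z hz
        simp only [List.mem_cons, List.mem_singleton, List.not_mem_nil]
        rintro f (rfl | rfl | hf) rfl
        · exact hbP (List.mem_of_mem_tail hz)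
        · exact ht1tail hz
        · exact hf
  obtain ⟨x, y, hx, hy, hxy, hxyE⟩ := hch c hcyc (by omega)
  rw [hcsupp] at hx hy
  rw [hcedges] at hxyE
  simp only [List.mem_append, List.mem_cons, List.mem_singleton, List.not_mem_nil, or_false] at hx hy hxyE
  push_neg at hxyE
  obtain ⟨hE1, hE2, hE3⟩ := hxyE
  -- helper: no chord from b
  have hbchord : ∀ z, G.Adj b z → z ∈ P.support → s(b, z) ∉ P.edges →
      s(b, z) ≠ s(t2, b) → s(b, z) ≠ s(b, t1) → False := by
    intro z hbz hzP _ hne2 hne3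
    rcases hPF z hzP with hzC | rfl | rfl
    · exact hbnb z hzC hbz.symm
    · exact hne3 rfl
    · exact hne2 (by rw [Sym2.eq_swap])
  have hxP : x ∈ P.support ∨ x = b := by
    rcases hx with h | h | h
    · exact Or.inl h
    · exact Or.inr h
    · exact Or.inl (h ▸ P.start_mem_support)
  have hyP : y ∈ P.support ∨ y = b := by
    rcases hy with h | h | h
    · exact Or.inl h
    · exact Or.inr h
    · exact Or.inl (h ▸ P.start_mem_support)
  rcases hxP with hxP | rfl
  · rcases hyP with hyP | rfl
    · -- both on P: shortcut contradicts minimality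
      obtain ⟨q, hqlen, hqsup⟩ := aux_shortcut P hPpath x y hxP hyP hxy hE1
      have : F q := fun z hz => hPF z (hqsup z hz)
      exact absurd (hmin q this) (by omega)
    · -- y = b
      refine hbchord x hxy.symm hxP ?_ ?_ ?_
      · rw [Sym2.eq_swap]; exact hE1
      · rw [Sym2.eq_swap]; exact hE2
      · rw [Sym2.eq_swap]; exact hE3
  · exact hbchord y hxy (by rcases hyP with h | rfl; exact h; exact absurd rfl hxy.ne) hE1 hE2 hE3

end Key

lemma aux_main [Fintype V] (hch : Chordal G) :
    ∀ (n : ℕ) (C : Set V), C.ncard ≤ n → (G.induce C).Connected →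
      G.IsClique (setNbhd G C) → ∃ v ∈ C, IsSimplicial G v := by
  intro n
  induction n with
  | zero =>
    intro C hc hconn _
    obtain ⟨⟨v, hv⟩⟩ := hconn.nonempty
    have : C.ncard = 0 := Nat.le_zero.mp hc
    rw [Set.ncard_eq_zero C.toFinite] at this
    simp [this] at hv
  | succ n ih =>
    intro C hcard hconn hclq
    set S' := setNbhd G C with hS'
    by_cases hall : ∀ x ∈ C ∪ S', ∀ y ∈ C ∪ S', x ≠ y → G.Adj x y
    · obtain ⟨⟨v, hv⟩⟩ := hconn.nonempty
      refine ⟨v, hv, ?_⟩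
      intro a b hva hvb hab
      have hmem : ∀ {z : V}, G.Adj v z → z ∈ C ∪ S' := by
        intro z h
        by_cases hz : z ∈ C
        · exact Or.inl hz
        · exact Or.inr ⟨hz, v, hv, h⟩
      exact hall a (hmem hva) b (hmem hvb) hab
    · push_neg at hall
      obtain ⟨x, hx, y, hy, hnexy, hnadjxy⟩ := hall
      have key : ∃ a b, a ∈ C ∧ a ≠ b ∧ ¬ G.Adj a b ∧ (b ∈ C ∪ S') ∧
          ∀ s ∈ S', s ≠ b → G.Adj s b := by
        by_cases hCS : ∃ p ∈ C, ∃ q ∈ S', ¬ G.Adj p q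
        · obtain ⟨p, hp, q, hq, hnpq⟩ := hCS
          exact ⟨p, q, hp, fun h => hq.1 (h ▸ hp), hnpq, Or.inr hq,
            fun s hs hsq => hclq hs hq hsq⟩
        · push_neg at hCS
          have hxC : x ∈ C := by
            rcases hx with h | h
            · exact h
            · rcases hy with h' | h'
              · exact (hnadjxy ((hCS y h' x h).symm)).elim
              · exact (hnadjxy (hclq h h' hnexy)).elim
          have hyC : y ∈ C := by
            rcases hy with h | h
            · exact h
            · exact (hnadjxy (hCS x hxC y h)).elim
          exact ⟨x, y, hxC, hnexy, hnadjxy, Or.inl hyC,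
            fun s hs _ => (hCS y hyC s hs).symm⟩
      obtain ⟨a, b, haC, hab, hnab, hbCS, hprop⟩ := key
      set Pr : Set V → Prop :=
        fun D => a ∈ D ∧ (G.induce D).Connected ∧ b ∉ D ∧ b ∉ setNbhd G D with hPr
      have hPa : Pr {a} := by
        refine ⟨rfl, ?_, ?_, ?_⟩
        · rw [connected_iff]
          refine ⟨?_, ⟨⟨a, rfl⟩⟩⟩
          rintro ⟨u, hu⟩ ⟨w, hw⟩
          simp only [Set.mem_singleton_iff] at hu hw
          subst hu; subst hw
          rfl
        · intro h; exact hab (Set.mem_singleton_iff.mp h).symm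
        · rintro ⟨_, z, hz, hzb⟩
          rw [Set.mem_singleton_iff] at hz
          subst hz
          exact hnab hzb
      set K : Set ℕ := {k | ∃ D, Pr D ∧ D.ncard = k} with hKdef
      have hKne : K.Nonempty := ⟨_, {a}, hPa, rfl⟩
      have hKbdd : BddAbove K := by
        refine ⟨Nat.card V, ?_⟩
        rintro k ⟨D, _, rfl⟩
        rw [← Set.ncard_univ]
        exact Set.ncard_le_ncard (Set.subset_univ D) Set.finite_univ
      obtain ⟨D, hPD, hDcard⟩ := Nat.sSup_mem hKne hKbdd
      obtain ⟨haD, hDconn, hbD, hbND⟩ := hPD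
      have hmax : ∀ t ∈ setNbhd G D, G.Adj b t := by
        intro t ht
        by_contra hnbt
        obtain ⟨htD, d, hdD, hdt⟩ := ht
        have hbt : b ≠ t := by
          rintro rfl
          exact hbND ⟨htD, d, hdD, hdt⟩
        have hP' : Pr (insert t D) := by
          refine ⟨Set.mem_insert_of_mem _ haD, aux_connected_insert hDconn hdD hdt, ?_, ?_⟩
          · rintro (h | h)
            · exact hbt h
            · exact hbD h
          · rintro ⟨hbni, e, he, heb⟩
            rcases he with rfl | heD
            · exact hnbt heb.symm
            · exact hbND ⟨hbD, e, heD, heb⟩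
        have hmem : (insert t D).ncard ∈ K := ⟨_, hP', rfl⟩
        have hle := le_csSup hKbdd hmem
        rw [Set.ncard_insert_of_notMem htD D.toFinite, hDcard] at hle
        omega
      have hDS' : ∀ s ∈ S', s ∉ D := by
        intro s hs hsD
        have hsb : s ≠ b := fun h => hbD (h ▸ hsD)
        exact hbND ⟨hbD, s, hsD, hprop s hs hsb⟩
      have hDC : D ⊆ C := by
        intro d hdD
        by_contra hdC
        obtain ⟨w, hw⟩ := aux_reachIn (hDconn.preconnected ⟨a, haD⟩ ⟨d, hdD⟩)
        obtain ⟨q, hqs, hqN⟩ := aux_escape w haC hdC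
        exact hDS' q hqN (hw q hqs)
      have hclqD : G.IsClique (setNbhd G D) := aux_nbhd_clique hch hDconn hbD hbND hmax
      have hwit : ∃ e ∈ C, e ∉ D := by
        rcases hbCS with hbC | hbS'
        · exact ⟨b, hbC, hbD⟩
        · obtain ⟨_, q, hqC, hqb⟩ := hbS'
          exact ⟨q, hqC, fun hqD => hbND ⟨hbD, q, hqD, hqb⟩⟩
      obtain ⟨e, heC, heD⟩ := hwit
      have hlt : D.ncard < C.ncard :=
        Set.ncard_lt_ncard ⟨hDC, fun hCD => heD (hCD heC)⟩ C.toFinite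
      obtain ⟨v, hvD, hsv⟩ := ih D (by omega) hDconn hclqD
      exact ⟨v, hDC hvD, hsv⟩

/-- If `G` is a connected chordal graph and `S` a clique such that `G − S` is
disconnected, then every connected component of `G − S` contains a simplicial
vertex of `G`. -/
theorem stmt8 {V : Type*} [Fintype V] (G : SimpleGraph V)
    (hch : Chordal G) (hconn : G.Connected) (S : Set V) (hS : G.IsClique S)
    (hdisc : ¬ (G.induce (Sᶜ : Set V)).Connected) :
    ∀ Q : Set V, IsCompOf G S Q → ∃ v ∈ Q, IsSimplicial G v := by
  intro Q hQ
  obtain ⟨_, hQconn, hclosed⟩ := hQ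
  have hsub : setNbhd G Q ⊆ S := by
    rintro t ⟨htQ, a, haQ, hat⟩
    by_contra htS
    exact htQ (hclosed a haQ t htS hat)
  exact aux_main hch Q.ncard Q le_rfl hQconn (hS.subset hsub)
end

section
/- Every chordal graph that is not a complete graph contains two non-adjacent simplicial vertices. -/
open SimpleGraph

section Dirac

variable {V : Type*} [DecidableEq V] {G : SimpleGraph V}

/-- simplicial relative to a set -/
def SimpIn (G : SimpleGraph V) (s : Set V) (v : V) : Prop :=
  ∀ ⦃a b : V⦄, a ∈ s → b ∈ s → G.Adj v a → G.Adj v b → a ≠ b → G.Adj a b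

/-- reachable within a set -/
def ReachIn (G : SimpleGraph V) (s : Set V) (x y : V) : Prop :=
  ∃ p : G.Walk x y, ∀ z ∈ p.support, z ∈ s

namespace ReachIn
variable {s s' : Set V} {x y z : V}

theorem refl (hx : x ∈ s) : ReachIn G s x x :=
  ⟨Walk.nil, by simp [hx]⟩

theorem symm (h : ReachIn G s x y) : ReachIn G s y x := by
  obtain ⟨p, hp⟩ := h
  exact ⟨p.reverse, by simpa [Walk.support_reverse] using hp⟩

theorem trans (h : ReachIn G s x y) (h' : ReachIn G s y z) : ReachIn G s x z := by
  obtain ⟨p, hp⟩ := h; obtain ⟨q, hq⟩ := h'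
  refine ⟨p.append q, fun w hw => ?_⟩
  rcases (Walk.mem_support_append_iff _ _).1 hw with h | h
  · exact hp _ h
  · exact hq _ h

theorem step (h : ReachIn G s x y) (ha : G.Adj y z) (hz : z ∈ s) : ReachIn G s x z :=
  h.trans ⟨Walk.cons ha Walk.nil, by rintro w hw; simp at hw; rcases hw with rfl | rfl
                                     exact h.symm.choose_spec _ (Walk.start_mem_support _)
                                     exact hz⟩

theorem mem_left (h : ReachIn G s x y) : x ∈ s :=
  h.choose_spec _ (Walk.start_mem_support _)

theorem mem_right (h : ReachIn G s x y) : y ∈ s :=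
  h.choose_spec _ (Walk.end_mem_support _)

theorem mono (h : ReachIn G s x y) (hss : s ⊆ s') : ReachIn G s' x y := by
  obtain ⟨p, hp⟩ := h
  exact ⟨p, fun z hz => hss (hp z hz)⟩

/-- any vertex on a confined walk from x is reachable from x -/
theorem of_mem_support {p : G.Walk x y} (hp : ∀ w ∈ p.support, w ∈ s)
    (hz : z ∈ p.support) : ReachIn G s x z :=
  ⟨p.takeUntil z hz, fun w hw => hp _ (p.support_takeUntil_subset hz hw)⟩

end ReachIn

theorem edge_of_length_one {u v : V} {p : G.Walk u v} (h : p.length = 1) :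
    s(u, v) ∈ p.edges := by
  cases p with
  | nil => simp at h
  | cons ha q =>
    have h0 : q.length = 0 := by simpa using h
    have := Walk.eq_of_length_eq_zero h0
    subst this
    simp

theorem no_shortcut {D : Set V} {t1 t2 u v : V}
    (W1 : G.Walk t1 u) (W2 : G.Walk u v) (W3 : G.Walk v t2)
    (hsupp : ∀ z ∈ ((W1.append W2).append W3).support, z ∈ D)
    (hmin : ∀ q : G.Walk t1 t2, (∀ z ∈ q.support, z ∈ D) →
      ((W1.append W2).append W3).length ≤ q.length)
    (hadj : G.Adj u v) (hne : s(u, v) ∉ ((W1.append W2).append W3).edges) : False := by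
  have h2 : W2.length ≤ 1 := by
    have hq := hmin (W1.append (Walk.cons hadj W3)) ?_
    · simp only [Walk.length_append, Walk.length_cons] at hq
      omega
    · intro z hz
      apply hsupp
      simp only [Walk.mem_support_append_iff, Walk.support_cons, List.mem_cons] at hz ⊢
      rcases hz with h | h | h
      · exact Or.inl (Or.inl h)
      · exact Or.inl (Or.inr (h ▸ Walk.start_mem_support W2))
      · exact Or.inr h
  interval_cases h : W2.length
  · exact hadj.ne (Walk.eq_of_length_eq_zero h)
  · apply hne
    have : s(u, v) ∈ W2.edges := edge_of_length_one h
    simp only [Walk.edges_append, List.mem_append]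
    exact Or.inl (Or.inr this)

theorem chord_kill {D : Set V} {t1 t2 : V} (P : G.Walk t1 t2)
    (hsupp : ∀ z ∈ P.support, z ∈ D)
    (hmin : ∀ q : G.Walk t1 t2, (∀ z ∈ q.support, z ∈ D) → P.length ≤ q.length)
    {x y : V} (hx : x ∈ P.support) (hy : y ∈ P.support)
    (hadj : G.Adj x y) (hne : s(x, y) ∉ P.edges) : False := by
  have hy' := hy
  rw [← P.take_spec hx, Walk.mem_support_append_iff] at hy'
  rcases hy' with hy1 | hy2
  · have hP : P = (((P.takeUntil x hx).takeUntil y hy1).append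
        ((P.takeUntil x hx).dropUntil y hy1)).append (P.dropUntil x hx) := by
      rw [Walk.take_spec, Walk.take_spec]
    rw [hP] at hsupp hmin hne
    exact no_shortcut _ _ _ hsupp hmin hadj.symm (by rwa [Sym2.eq_swap] at hne)
  · have hP : P = ((P.takeUntil x hx).append ((P.dropUntil x hx).takeUntil y hy2)).append
        ((P.dropUntil x hx).dropUntil y hy2) := by
      rw [← Walk.append_assoc, Walk.take_spec, Walk.take_spec]
    rw [hP] at hsupp hmin hne
    exact no_shortcut _ _ _ hsupp hmin hadj hne

theorem exists_min_path {D : Set V} {t1 t2 : V} (h : ReachIn G D t1 t2) :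
    ∃ P : G.Walk t1 t2, P.IsPath ∧ (∀ z ∈ P.support, z ∈ D) ∧
      ∀ q : G.Walk t1 t2, (∀ z ∈ q.support, z ∈ D) → P.length ≤ q.length := by
  classical
  obtain ⟨p, hp⟩ := h
  have hex : ∃ n, ∃ P : G.Walk t1 t2, P.IsPath ∧ (∀ z ∈ P.support, z ∈ D) ∧ P.length = n :=
    ⟨p.bypass.length, p.bypass, p.bypass_isPath,
      fun z hz => hp z (p.support_bypass_subset hz), rfl⟩
  obtain ⟨P, hP, hPD, hPl⟩ := Nat.find_spec hex
  refine ⟨P, hP, hPD, fun q hq => ?_⟩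
  have h1 : Nat.find hex ≤ q.bypass.length :=
    Nat.find_min' hex ⟨q.bypass, q.bypass_isPath,
      fun z hz => hq z (q.support_bypass_subset hz), rfl⟩
  have h2 := q.length_bypass_le
  omega

theorem exists_last_adj {u w : V} (p : G.Walk u w) (h : u ≠ w) :
    ∃ z ∈ p.support, G.Adj z w := by
  induction p with
  | nil => exact absurd rfl h
  | @cons u v w ha q ih =>
    by_cases hvw : v = w
    · exact ⟨u, Walk.start_mem_support _, hvw ▸ ha⟩
    · obtain ⟨z, hz, hzw⟩ := ih hvw
      exact ⟨z, by simp [hz], hzw⟩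

theorem not_mem_takeUntil_of_takeUntil {a t z : V} (p : G.Walk a t)
    (hz : z ∈ p.support) (hzt : z ≠ t) (hcount : p.support.count t = 1) :
    t ∉ (p.takeUntil z hz).support := by
  intro htmem
  have hspec := p.take_spec hz
  have heq : p.support = (p.takeUntil z hz).support ++ (p.dropUntil z hz).support.tail := by
    conv_lhs => rw [← hspec]
    exact Walk.support_append _ _
  have htail : t ∈ (p.dropUntil z hz).support.tail := by
    have hts : t ∈ (p.dropUntil z hz).support := Walk.end_mem_support _
    rw [Walk.support_eq_cons (p.dropUntil z hz), List.mem_cons] at hts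
    rcases hts with h | h
    · exact absurd h.symm hzt
    · exact h
  have hc1 : 1 ≤ (p.takeUntil z hz).support.count t := List.one_le_count_iff.2 htmem
  have hc2 : 1 ≤ ((p.dropUntil z hz).support.tail).count t := List.one_le_count_iff.2 htail
  rw [heq, List.count_append] at hcount
  omega

theorem sep_nbr (G : SimpleGraph V) {s T : Finset V} {a b : V} (ha : a ∈ s)
    (hT : T ⊆ s) (hna : a ∉ T) (hnb : b ∉ T)
    (hsep : ¬ ReachIn G ↑(s \ T) a b)
    (hmin : ∀ T' : Finset V, T' ⊆ s → a ∉ T' → b ∉ T' →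
      ¬ ReachIn G ↑(s \ T') a b → T.card ≤ T'.card)
    {t : V} (ht : t ∈ T) :
    ∃ z, ReachIn G ↑(s \ T) a z ∧ G.Adj z t := by
  by_contra hno
  push_neg at hno
  have hlt : (T.erase t).card < T.card := Finset.card_erase_lt_of_mem ht
  have hsep' : ¬ ReachIn G ↑(s \ T.erase t) a b := by
    rintro ⟨p, hp⟩
    by_cases htp : t ∈ p.support
    · set p1 := p.takeUntil t htp with hp1def
      have hp1supp : ∀ z ∈ p1.support, z ∈ ↑(s \ T.erase t) :=
        fun z hz => hp z (p.support_takeUntil_subset htp hz)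
      have hat : a ≠ t := fun h => hna (h ▸ ht)
      obtain ⟨z, hzmem, hzadj⟩ := exists_last_adj p1 hat
      have hzt : z ≠ t := hzadj.ne
      have hcount : p1.support.count t = 1 := p.count_support_takeUntil_eq_one htp
      have htnot : t ∉ (p1.takeUntil z hzmem).support :=
        not_mem_takeUntil_of_takeUntil p1 hzmem hzt hcount
      refine hno z ⟨p1.takeUntil z hzmem, fun w hw => ?_⟩ hzadj
      have hw1 : w ∈ ↑(s \ T.erase t) := hp1supp w (p1.support_takeUntil_subset hzmem hw)
      have hwt : w ≠ t := fun h => htnot (h ▸ hw)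
      simp only [Finset.coe_sdiff, Set.mem_diff, Finset.mem_coe, Finset.mem_sdiff] at hw1 ⊢
      exact ⟨hw1.1, fun hwT => hw1.2 (Finset.mem_erase.2 ⟨hwt, hwT⟩)⟩
    · refine hsep ⟨p, fun w hw => ?_⟩
      have hw1 := hp w hw
      have hwt : w ≠ t := fun h => htp (h ▸ hw)
      simp only [Finset.coe_sdiff, Set.mem_diff, Finset.mem_coe, Finset.mem_sdiff] at hw1 ⊢
      exact ⟨hw1.1, fun hwT => hw1.2 (Finset.mem_erase.2 ⟨hwt, hwT⟩)⟩
  have := hmin (T.erase t) ((Finset.erase_subset _ _).trans hT)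
    (fun h => hna (Finset.mem_of_mem_erase h)) (fun h => hnb (Finset.mem_of_mem_erase h)) hsep'
  omega

theorem side_simp (G : SimpleGraph V) {s A T : Finset V} {a : V}
    (ih : ∀ t, t ⊂ s → ∀ u v : V, u ∈ t → v ∈ t → u ≠ v → ¬ G.Adj u v →
      ∃ x y : V, x ∈ t ∧ y ∈ t ∧ x ≠ y ∧ ¬ G.Adj x y ∧ SimpIn G ↑t x ∧ SimpIn G ↑t y)
    (hss : A ∪ T ⊂ s) (ha : a ∈ A)
    (hclT : ∀ t1 ∈ T, ∀ t2 ∈ T, t1 ≠ t2 → G.Adj t1 t2)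
    (hclosed : ∀ u ∈ A, ∀ x ∈ s, G.Adj u x → x ∈ A ∪ T) :
    ∃ u ∈ A, SimpIn G ↑s u := by
  have lift : ∀ u ∈ A, SimpIn G ↑(A ∪ T) u → SimpIn G ↑s u := by
    intro u hu hsimp x y hxs hys hux huy hxy
    exact hsimp (by exact_mod_cast hclosed u hu x (by exact_mod_cast hxs) hux)
      (by exact_mod_cast hclosed u hu y (by exact_mod_cast hys) huy) hux huy hxy
  by_cases hcl : ∀ x ∈ A ∪ T, ∀ y ∈ A ∪ T, x ≠ y → G.Adj x y
  · refine ⟨a, ha, lift a ha ?_⟩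
    intro x y hx hy hax hay hxy
    exact hcl x (by exact_mod_cast hx) y (by exact_mod_cast hy) hxy
  · push_neg at hcl
    obtain ⟨x, hx, y, hy, hxy, hnadj⟩ := hcl
    obtain ⟨u, v, hu, hv, huv, hnuv, hsu, hsv⟩ := ih (A ∪ T) hss x y hx hy hxy hnadj
    rcases Finset.mem_union.1 hu with huA | huT
    · exact ⟨u, huA, lift u huA hsu⟩
    · rcases Finset.mem_union.1 hv with hvA | hvT
      · exact ⟨v, hvA, lift v hvA hsv⟩
      · exact absurd (hclT u huT v hvT huv) hnuv

theorem dirac_rel (G : SimpleGraph V) (hch : Chordal G) :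
    ∀ s : Finset V, ∀ a b : V, a ∈ s → b ∈ s → a ≠ b → ¬ G.Adj a b →
      ∃ u v : V, u ∈ s ∧ v ∈ s ∧ u ≠ v ∧ ¬ G.Adj u v ∧ SimpIn G ↑s u ∧ SimpIn G ↑s v := by
  classical
  intro s
  induction s using Finset.strongInduction with
  | _ s ih =>
  intro a b ha hb hab hnadj
  -- the trivial separator
  have hsep0 : ¬ ReachIn G ↑(s \ (s \ {a, b})) a b := by
    rintro ⟨p, hp⟩
    cases p with
    | nil => exact hab rfl
    | cons h q =>
      rename_i w
      have hw := hp w (by simp)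
      have hw2 : w = a ∨ w = b := by
        rw [Finset.sdiff_sdiff_self_left] at hw
        simp only [Finset.coe_inter, Set.mem_inter_iff, Finset.mem_coe, Finset.mem_insert,
          Finset.mem_singleton] at hw
        exact hw.2
      rcases hw2 with rfl | rfl
      · exact h.ne rfl
      · exact hnadj h
  -- minimal separator T
  have hne0 : ((s.powerset).filter (fun T => a ∉ T ∧ b ∉ T ∧
      ¬ ReachIn G ↑(s \ T) a b)).Nonempty :=
    ⟨s \ {a, b}, Finset.mem_filter.2 ⟨Finset.mem_powerset.2 Finset.sdiff_subset,
      by simp [ha], by simp [hb], hsep0⟩⟩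
  obtain ⟨T, hTmem, hTmin⟩ := Finset.exists_min_image _ Finset.card hne0
  rw [Finset.mem_filter, Finset.mem_powerset] at hTmem
  have hTsub := hTmem.1
  have haT := hTmem.2.1
  have hbT := hTmem.2.2.1
  have hTsep := hTmem.2.2.2
  have hmin' : ∀ T' : Finset V, T' ⊆ s → a ∉ T' → b ∉ T' →
      ¬ ReachIn G ↑(s \ T') a b → T.card ≤ T'.card := fun T' h1 h2 h3 h4 =>
    hTmin T' (Finset.mem_filter.2 ⟨Finset.mem_powerset.2 h1, h2, h3, h4⟩)
  -- components of a and b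
  set A : Finset V := (s \ T).filter (fun x => ReachIn G ↑(s \ T) a x) with hAdef
  set B : Finset V := (s \ T).filter (fun x => ReachIn G ↑(s \ T) b x) with hBdef
  have hAmem : ∀ x, x ∈ A ↔ x ∈ s \ T ∧ ReachIn G ↑(s \ T) a x := by
    intro x; rw [hAdef, Finset.mem_filter]
  have hBmem : ∀ x, x ∈ B ↔ x ∈ s \ T ∧ ReachIn G ↑(s \ T) b x := by
    intro x; rw [hBdef, Finset.mem_filter]
  have haA : a ∈ A := (hAmem a).2 ⟨Finset.mem_sdiff.2 ⟨ha, haT⟩,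
    ReachIn.refl (Finset.mem_coe.2 (Finset.mem_sdiff.2 ⟨ha, haT⟩))⟩
  have hbB : b ∈ B := (hBmem b).2 ⟨Finset.mem_sdiff.2 ⟨hb, hbT⟩,
    ReachIn.refl (Finset.mem_coe.2 (Finset.mem_sdiff.2 ⟨hb, hbT⟩))⟩
  have hfar : ∀ x ∈ A, ∀ y ∈ B, x ≠ y ∧ ¬ G.Adj x y := by
    intro x hx y hy
    obtain ⟨hxs, hxr⟩ := (hAmem x).1 hx
    obtain ⟨hys, hyr⟩ := (hBmem y).1 hy
    constructor
    · rintro rfl; exact hTsep (hxr.trans hyr.symm)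
    · intro hadj; exact hTsep ((hxr.step hadj (Finset.mem_coe.2 hys)).trans hyr.symm)
  have hclosedA : ∀ u ∈ A, ∀ x ∈ s, G.Adj u x → x ∈ A ∪ T := by
    intro u hu x hx hadj
    by_cases hxT : x ∈ T
    · exact Finset.mem_union_right _ hxT
    · obtain ⟨hus, hur⟩ := (hAmem u).1 hu
      have hxs : x ∈ s \ T := Finset.mem_sdiff.2 ⟨hx, hxT⟩
      exact Finset.mem_union_left _ ((hAmem x).2 ⟨hxs, hur.step hadj (Finset.mem_coe.2 hxs)⟩)
  have hclosedB : ∀ u ∈ B, ∀ x ∈ s, G.Adj u x → x ∈ B ∪ T := by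
    intro u hu x hx hadj
    by_cases hxT : x ∈ T
    · exact Finset.mem_union_right _ hxT
    · obtain ⟨hus, hur⟩ := (hBmem u).1 hu
      have hxs : x ∈ s \ T := Finset.mem_sdiff.2 ⟨hx, hxT⟩
      exact Finset.mem_union_left _ ((hBmem x).2 ⟨hxs, hur.step hadj (Finset.mem_coe.2 hxs)⟩)
  have hnbrA : ∀ t ∈ T, ∃ z, z ∈ A ∧ G.Adj z t := by
    intro t ht
    obtain ⟨z, hzr, hzadj⟩ := sep_nbr G ha hTsub haT hbT hTsep hmin' ht
    exact ⟨z, (hAmem z).2 ⟨Finset.mem_coe.1 hzr.mem_right, hzr⟩, hzadj⟩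
  have hnbrB : ∀ t ∈ T, ∃ z, z ∈ B ∧ G.Adj z t := by
    intro t ht
    obtain ⟨z, hzr, hzadj⟩ := sep_nbr G hb hTsub hbT haT (fun h => hTsep h.symm)
      (fun T' h1 h2 h3 h4 => hmin' T' h1 h3 h2 (fun h => h4 h.symm)) ht
    exact ⟨z, (hBmem z).2 ⟨Finset.mem_coe.1 hzr.mem_right, hzr⟩, hzadj⟩
  -- T is a clique
  have hTclique : ∀ t1 ∈ T, ∀ t2 ∈ T, t1 ≠ t2 → G.Adj t1 t2 := by
    intro t1 ht1 t2 ht2 h12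
    by_contra hn12
    obtain ⟨za1, hza1A, hza1⟩ := hnbrA t1 ht1
    obtain ⟨za2, hza2A, hza2⟩ := hnbrA t2 ht2
    obtain ⟨zb1, hzb1B, hzb1⟩ := hnbrB t1 ht1
    obtain ⟨zb2, hzb2B, hzb2⟩ := hnbrB t2 ht2
    set DA : Set V := ↑A ∪ {t1, t2} with hDA
    set DB : Set V := ↑B ∪ {t1, t2} with hDB
    have reachA : ∀ z1 ∈ A, ∀ z2 ∈ A, ReachIn G ↑A z1 z2 := by
      intro z1 h1 z2 h2
      obtain ⟨_, ⟨p1, hp1⟩⟩ := (hAmem z1).1 h1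
      obtain ⟨_, ⟨p2, hp2⟩⟩ := (hAmem z2).1 h2
      refine ⟨p1.reverse.append p2, fun w hw => ?_⟩
      rw [Walk.mem_support_append_iff] at hw
      have hw' : w ∈ p1.support ∨ w ∈ p2.support := by
        simpa [Walk.support_reverse] using hw
      have hreach : ReachIn G ↑(s \ T) a w := by
        rcases hw' with h | h
        · exact ReachIn.of_mem_support hp1 h
        · exact ReachIn.of_mem_support hp2 h
      exact Finset.mem_coe.2 ((hAmem w).2 ⟨Finset.mem_coe.1 hreach.mem_right, hreach⟩)
    have reachB : ∀ z1 ∈ B, ∀ z2 ∈ B, ReachIn G ↑B z1 z2 := by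
      intro z1 h1 z2 h2
      obtain ⟨_, ⟨p1, hp1⟩⟩ := (hBmem z1).1 h1
      obtain ⟨_, ⟨p2, hp2⟩⟩ := (hBmem z2).1 h2
      refine ⟨p1.reverse.append p2, fun w hw => ?_⟩
      rw [Walk.mem_support_append_iff] at hw
      have hw' : w ∈ p1.support ∨ w ∈ p2.support := by
        simpa [Walk.support_reverse] using hw
      have hreach : ReachIn G ↑(s \ T) b w := by
        rcases hw' with h | h
        · exact ReachIn.of_mem_support hp1 h
        · exact ReachIn.of_mem_support hp2 h
      exact Finset.mem_coe.2 ((hBmem w).2 ⟨Finset.mem_coe.1 hreach.mem_right, hreach⟩)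
    have ht1DA : t1 ∈ DA := by simp [hDA]
    have ht2DA : t2 ∈ DA := by simp [hDA]
    have ht1DB : t1 ∈ DB := by simp [hDB]
    have ht2DB : t2 ∈ DB := by simp [hDB]
    have hADA : (↑A : Set V) ⊆ DA := Set.subset_union_left
    have hBDB : (↑B : Set V) ⊆ DB := Set.subset_union_left
    have hreachDA : ReachIn G DA t1 t2 :=
      ((ReachIn.refl ht1DA).step hza1.symm (hADA hza1A)).trans
        (((reachA za1 hza1A za2 hza2A).mono hADA).step hza2 ht2DA)
    have hreachDB : ReachIn G DB t1 t2 :=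
      ((ReachIn.refl ht1DB).step hzb1.symm (hBDB hzb1B)).trans
        (((reachB zb1 hzb1B zb2 hzb2B).mono hBDB).step hzb2 ht2DB)
    obtain ⟨P, hPpath, hPsupp, hPmin⟩ := exists_min_path hreachDA
    obtain ⟨Q, hQpath, hQsupp, hQmin⟩ := exists_min_path hreachDB
    have hP2 : 2 ≤ P.length := by
      by_contra hlt
      push_neg at hlt
      by_cases h0 : P.length = 0
      · exact h12 (Walk.eq_of_length_eq_zero h0)
      · have h1 : P.length = 1 := by omega
        exact hn12 (P.adj_of_mem_edges (edge_of_length_one h1))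
    have hQ2 : 2 ≤ Q.length := by
      by_contra hlt
      push_neg at hlt
      by_cases h0 : Q.length = 0
      · exact h12 (Walk.eq_of_length_eq_zero h0)
      · have h1 : Q.length = 1 := by omega
        exact hn12 (Q.adj_of_mem_edges (edge_of_length_one h1))
    set c : G.Walk t1 t1 := P.append Q.reverse with hc
    have hclen : c.length = P.length + Q.length := by
      rw [hc, Walk.length_append, Walk.length_reverse]
    have hlen4 : 4 ≤ c.length := by omega
    have hinter : ∀ z, z ∈ P.support → z ∈ Q.support → z = t1 ∨ z = t2 := by
      intro z hzP hzQ
      have h1 := hPsupp z hzP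
      have h2 := hQsupp z hzQ
      simp only [hDA, hDB, Set.mem_union, Set.mem_insert_iff, Set.mem_singleton_iff,
        Finset.mem_coe] at h1 h2
      rcases h1 with h1 | h1
      · rcases h2 with h2 | h2
        · exact absurd rfl (hfar z h1 z h2).1
        · exact h2
      · exact h1
    have hPnd : P.support.Nodup := hPpath.support_nodup
    have hQrnd : Q.reverse.support.Nodup := hQpath.reverse.support_nodup
    have hct : c.support.tail = P.support.tail ++ Q.reverse.support.tail := by
      rw [hc, Walk.support_append]
      rw [Walk.support_eq_cons P]
      simp
    have ht1P : t1 ∉ P.support.tail := by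
      have h := hPnd
      rw [Walk.support_eq_cons P] at h
      exact (List.nodup_cons.1 h).1
    have ht2Qr : t2 ∉ Q.reverse.support.tail := by
      have h := hQrnd
      rw [Walk.support_eq_cons Q.reverse] at h
      exact (List.nodup_cons.1 h).1
    have htailnd : c.support.tail.Nodup := by
      rw [hct]
      refine List.Nodup.append (hPnd.tail) (hQrnd.tail) ?_
      intro z hz1 hz2
      have hzP : z ∈ P.support := List.mem_of_mem_tail hz1
      have hzQ : z ∈ Q.support := by
        have h := List.mem_of_mem_tail hz2
        rwa [Walk.support_reverse, List.mem_reverse] at h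
      rcases hinter z hzP hzQ with rfl | rfl
      · exact ht1P hz1
      · exact ht2Qr hz2
    have hedges : c.edges = P.edges ++ Q.reverse.edges := by
      rw [hc, Walk.edges_append]
    have hdisj : ∀ e ∈ P.edges, e ∉ Q.reverse.edges := by
      intro e
      induction e using Sym2.ind with
      | _ u w =>
        intro heP heQ
        have huP : u ∈ P.support := P.fst_mem_support_of_mem_edges heP
        have hwP : w ∈ P.support := P.snd_mem_support_of_mem_edges heP
        have heQ' : s(u, w) ∈ Q.edges := by
          rwa [Walk.edges_reverse, List.mem_reverse] at heQ
        have huQ : u ∈ Q.support := Q.fst_mem_support_of_mem_edges heQ'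
        have hwQ : w ∈ Q.support := Q.snd_mem_support_of_mem_edges heQ'
        have hadj : G.Adj u w := P.adj_of_mem_edges heP
        rcases hinter u huP huQ with rfl | rfl <;> rcases hinter w hwP hwQ with rfl | rfl
        · exact hadj.ne rfl
        · exact hn12 hadj
        · exact hn12 hadj.symm
        · exact hadj.ne rfl
    have hnenil : c ≠ Walk.nil := by
      intro h
      have h0 : c.length = 0 := by rw [h]; rfl
      omega
    have htrail : c.edges.Nodup := by
      rw [hedges]
      exact List.Nodup.append hPpath.isTrail.edges_nodup
        hQpath.reverse.isTrail.edges_nodup hdisj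
    have hcycle : c.IsCycle := ⟨⟨⟨htrail⟩, hnenil⟩, htailnd⟩
    obtain ⟨x, y, hxc, hyc, hxy, hchord⟩ := hch c hcycle hlen4
    have hmemc : ∀ z, z ∈ c.support → z ∈ P.support ∨ z ∈ Q.support := by
      intro z hz
      rw [hc, Walk.mem_support_append_iff] at hz
      rcases hz with h | h
      · exact Or.inl h
      · right; rwa [Walk.support_reverse, List.mem_reverse] at h
    have hkillP : ∀ u w, u ∈ P.support → w ∈ P.support → G.Adj u w →
        s(u, w) ∉ c.edges → False := by
      intro u w hu hw hadj hne
      exact chord_kill P hPsupp hPmin hu hw hadj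
        (fun h => hne (by rw [hedges]; exact List.mem_append_left _ h))
    have hkillQ : ∀ u w, u ∈ Q.support → w ∈ Q.support → G.Adj u w →
        s(u, w) ∉ c.edges → False := by
      intro u w hu hw hadj hne
      refine chord_kill Q hQsupp hQmin hu hw hadj (fun h => hne ?_)
      rw [hedges]
      exact List.mem_append_right _ (by rwa [Walk.edges_reverse, List.mem_reverse])
    have hmixed : ∀ u w, u ∈ P.support → u ∉ Q.support → w ∈ Q.support → w ∉ P.support →
        G.Adj u w → False := by
      intro u w huP huQ hwQ hwP hadj
      have huA : u ∈ A := by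
        have h := hPsupp u huP
        simp only [hDA, Set.mem_union, Set.mem_insert_iff, Set.mem_singleton_iff,
          Finset.mem_coe] at h
        rcases h with h | rfl | rfl
        · exact h
        · exact absurd (Walk.start_mem_support Q) huQ
        · exact absurd (Walk.end_mem_support Q) huQ
      have hwB : w ∈ B := by
        have h := hQsupp w hwQ
        simp only [hDB, Set.mem_union, Set.mem_insert_iff, Set.mem_singleton_iff,
          Finset.mem_coe] at h
        rcases h with h | rfl | rfl
        · exact h
        · exact absurd (Walk.start_mem_support P) hwP
        · exact absurd (Walk.end_mem_support P) hwP
      exact (hfar u huA w hwB).2 hadj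
    rcases hmemc x hxc with hxP | hxQ <;> rcases hmemc y hyc with hyP | hyQ
    · exact hkillP x y hxP hyP hxy hchord
    · by_cases hxQ : x ∈ Q.support
      · exact hkillQ x y hxQ hyQ hxy hchord
      · by_cases hyP : y ∈ P.support
        · exact hkillP x y hxP hyP hxy hchord
        · exact hmixed x y hxP hxQ hyQ hyP hxy
    · by_cases hyQ : y ∈ Q.support
      · exact hkillQ x y hxQ hyQ hxy hchord
      · by_cases hxP : x ∈ P.support
        · exact hkillP x y hxP hyP hxy hchord
        · exact hmixed y x hyP hyQ hxQ hxP hxy.symm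
    · exact hkillQ x y hxQ hyQ hxy hchord
  -- apply induction to both sides
  have hAsub : A ⊆ s := fun x hx => (Finset.mem_sdiff.1 ((hAmem x).1 hx).1).1
  have hBsub : B ⊆ s := fun x hx => (Finset.mem_sdiff.1 ((hBmem x).1 hx).1).1
  have hssA : A ∪ T ⊂ s := by
    rw [Finset.ssubset_iff_of_subset (Finset.union_subset hAsub hTsub)]
    refine ⟨b, hb, fun hmem => ?_⟩
    rcases Finset.mem_union.1 hmem with h | h
    · exact hTsep ((hAmem b).1 h).2
    · exact hbT h
  have hssB : B ∪ T ⊂ s := by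
    rw [Finset.ssubset_iff_of_subset (Finset.union_subset hBsub hTsub)]
    refine ⟨a, ha, fun hmem => ?_⟩
    rcases Finset.mem_union.1 hmem with h | h
    · exact hTsep ((hBmem a).1 h).2.symm
    · exact haT h
  obtain ⟨uA, huA, hsimpA⟩ := side_simp G ih hssA haA hTclique hclosedA
  obtain ⟨vB, hvB, hsimpB⟩ := side_simp G ih hssB hbB hTclique hclosedB
  exact ⟨uA, vB, hAsub huA, hBsub hvB, (hfar uA huA vB hvB).1, (hfar uA huA vB hvB).2,
    hsimpA, hsimpB⟩

end Dirac

/-- Every chordal graph that is not complete contains two non-adjacent simplicial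
vertices. -/
theorem stmt9 {V : Type*} [Fintype V] (G : SimpleGraph V) (hch : Chordal G)
    (hnc : ¬ ∀ u v : V, u ≠ v → G.Adj u v) :
    ∃ u v : V, u ≠ v ∧ ¬ G.Adj u v ∧ IsSimplicial G u ∧ IsSimplicial G v := by
  classical
  push_neg at hnc
  obtain ⟨u, v, huv, hnadj⟩ := hnc
  obtain ⟨x, y, hx, hy, hxy, hnxy, hsx, hsy⟩ := dirac_rel G hch Finset.univ u v
    (Finset.mem_univ u) (Finset.mem_univ v) huv hnadj
  exact ⟨x, y, hxy, hnxy,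
    fun p q h1 h2 h3 => hsx (by simp) (by simp) h1 h2 h3,
    fun p q h1 h2 h3 => hsy (by simp) (by simp) h1 h2 h3⟩
end

section
/- Let G be a connected chordal graph and S a clique of G with V(G) ∖ S nonempty. Then every connected component of G − S contains a simplicial vertex of G. -/
open SimpleGraph

namespace ChordalAux

open SimpleGraph Walk

variable {V : Type*} {G : SimpleGraph V}

/-- Reachability avoiding a set `A`. -/
def RA (G : SimpleGraph V) (A : Set V) (x z : V) : Prop :=
  ∃ w : G.Walk x z, ∀ v ∈ w.support, v ∉ A

lemma RA.notMem_end {A : Set V} {x z : V} (h : RA G A x z) : z ∉ A := by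
  obtain ⟨w, hw⟩ := h; exact hw z w.end_mem_support

lemma RA.notMem_start {A : Set V} {x z : V} (h : RA G A x z) : x ∉ A := by
  obtain ⟨w, hw⟩ := h; exact hw x w.start_mem_support

lemma RA.refl {A : Set V} {x : V} (hx : x ∉ A) : RA G A x x :=
  ⟨Walk.nil, by simpa using hx⟩

lemma RA.trans {A : Set V} {x z u : V} (h1 : RA G A x z) (h2 : RA G A z u) : RA G A x u := by
  obtain ⟨w1, hw1⟩ := h1; obtain ⟨w2, hw2⟩ := h2
  exact ⟨w1.append w2, by
    intro v hv
    rcases (Walk.mem_support_append_iff _ _).mp hv with h | h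
    · exact hw1 v h
    · exact hw2 v h⟩

lemma RA.symm {A : Set V} {x z : V} (h : RA G A x z) : RA G A z x := by
  obtain ⟨w, hw⟩ := h
  exact ⟨w.reverse, by intro v hv; rw [Walk.support_reverse, List.mem_reverse] at hv; exact hw v hv⟩

lemma RA.adj {A : Set V} {x z u : V} (h : RA G A x z) (ha : G.Adj z u) (hu : u ∉ A) :
    RA G A x u := by
  obtain ⟨w, hw⟩ := h
  exact ⟨w.concat ha, by
    intro v hv
    simp only [Walk.support_concat, List.concat_eq_append, List.mem_append, List.mem_singleton] at hv
    rcases hv with h | rfl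
    · exact hw v h
    · exact hu⟩

lemma ra_of_mem_support {A : Set V} {x z v : V} (w : G.Walk x z)
    (hw : ∀ u ∈ w.support, u ∉ A) (hv : v ∈ w.support) : RA G A x v := by
  classical
  exact ⟨w.takeUntil v hv, fun u hu => hw u (w.support_takeUntil_subset hv hu)⟩

/-- `A` separates `x` from `y`. -/
def Sep (G : SimpleGraph V) (A : Set V) (x y : V) : Prop :=
  x ∉ A ∧ y ∉ A ∧ ∀ w : G.Walk x y, ∃ v ∈ w.support, v ∈ A

lemma Sep.not_ra {A : Set V} {x y : V} (h : Sep G A x y) : ¬ RA G A x y := by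
  rintro ⟨w, hw⟩
  obtain ⟨v, hv, hvA⟩ := h.2.2 w
  exact hw v hv hvA

lemma Sep.symm {A : Set V} {x y : V} (h : Sep G A x y) : Sep G A y x := by
  refine ⟨h.2.1, h.1, fun w => ?_⟩
  obtain ⟨v, hv, hvA⟩ := h.2.2 w.reverse
  rw [Walk.support_reverse, List.mem_reverse] at hv
  exact ⟨v, hv, hvA⟩

lemma sep_exists {x y : V} (hxy : x ≠ y) (hnadj : ¬ G.Adj x y) : Sep G ({x, y}ᶜ) x y := by
  refine ⟨by simp, by simp, fun w => ?_⟩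
  cases w with
  | nil => exact absurd rfl hxy
  | cons h p =>
    rename_i c
    refine ⟨c, by simp, ?_⟩
    simp only [Set.mem_compl_iff, Set.mem_insert_iff, Set.mem_singleton_iff]
    push_neg
    exact ⟨fun hc => h.ne' hc, fun hc => hnadj (hc ▸ h)⟩

lemma two_le_length {u v : V} (w : G.Walk u v) (hne : u ≠ v) (he : s(u, v) ∉ w.edges) :
    2 ≤ w.length := by
  cases w with
  | nil => exact absurd rfl hne
  | cons h q =>
    rcases Nat.eq_zero_or_pos q.length with hq | hq
    · have := Walk.eq_of_length_eq_zero hq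
      subst this
      simp at he
    · simp only [Walk.length_cons]
      omega

lemma exists_shorter {a b u v : V} (p : G.Walk a b) (hu : u ∈ p.support) (hv : v ∈ p.support)
    (huv : G.Adj u v) (he : s(u, v) ∉ p.edges) :
    ∃ q : G.Walk a b, q.length < p.length ∧ ∀ z ∈ q.support, z ∈ p.support := by
  classical
  have hsplit : (p.takeUntil u hu).append (p.dropUntil u hu) = p := p.take_spec hu
  have hlen : (p.takeUntil u hu).length + (p.dropUntil u hu).length = p.length := by
    conv_rhs => rw [← hsplit]
    rw [Walk.length_append]
  by_cases hvd : v ∈ (p.dropUntil u hu).support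
  · -- u comes before v
    set d := p.dropUntil u hu with hd
    have hdsplit : (d.takeUntil v hvd).append (d.dropUntil v hvd) = d := d.take_spec hvd
    have hdlen : (d.takeUntil v hvd).length + (d.dropUntil v hvd).length = d.length := by
      conv_rhs => rw [← hdsplit]
      rw [Walk.length_append]
    have h2 : 2 ≤ (d.takeUntil v hvd).length := by
      refine two_le_length _ huv.ne fun hmem => he ?_
      exact p.edges_dropUntil_subset hu ((d.edges_takeUntil_subset hvd) hmem)
    refine ⟨(p.takeUntil u hu).append (Walk.cons huv (d.dropUntil v hvd)), ?_, ?_⟩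
    · rw [Walk.length_append, Walk.length_cons]
      omega
    · intro z hz
      rcases (Walk.mem_support_append_iff _ _).mp hz with h | h
      · exact p.support_takeUntil_subset hu h
      · rw [Walk.support_cons, List.mem_cons] at h
        rcases h with rfl | h
        · exact hu
        · exact p.support_dropUntil_subset hu ((d.support_dropUntil_subset hvd) h)
  · -- v comes before u (v is in the takeUntil part)
    have hvt : v ∈ (p.takeUntil u hu).support := by
      rcases (Walk.mem_support_append_iff _ _).mp (by rw [hsplit]; exact hv) with h | h
      · exact h
      · exact absurd h hvd
    set t := p.takeUntil u hu with ht
    have htsplit : (t.takeUntil v hvt).append (t.dropUntil v hvt) = t := t.take_spec hvt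
    have htlen : (t.takeUntil v hvt).length + (t.dropUntil v hvt).length = t.length := by
      conv_rhs => rw [← htsplit]
      rw [Walk.length_append]
    have h2 : 2 ≤ (t.dropUntil v hvt).length := by
      refine two_le_length _ (Ne.symm huv.ne) fun hmem => he ?_
      have : s(v, u) ∈ p.edges := p.edges_takeUntil_subset hu ((t.edges_dropUntil_subset hvt) hmem)
      rwa [Sym2.eq_swap] at this
    refine ⟨(t.takeUntil v hvt).append (Walk.cons huv.symm (p.dropUntil u hu)), ?_, ?_⟩
    · rw [Walk.length_append, Walk.length_cons]
      omega
    · intro z hz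
      rcases (Walk.mem_support_append_iff _ _).mp hz with h | h
      · exact p.support_takeUntil_subset hu ((t.support_takeUntil_subset hvt) h)
      · rw [Walk.support_cons, List.mem_cons] at h
        rcases h with rfl | h
        · exact p.support_takeUntil_subset hu hvt
        · exact p.support_dropUntil_subset hu h

end ChordalAux

namespace ChordalAux

open SimpleGraph Walk

variable {V : Type*} {G : SimpleGraph V}

lemma first_hit {A : Set V} {a : V} (haA : a ∈ A) :
    ∀ {x z : V} (w : G.Walk x z), x ∉ A → (∀ v ∈ w.support, v ∈ A → v = a) →
      a ∈ w.support → ∃ u, RA G A x u ∧ G.Adj u a := by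
  intro x z w
  induction w with
  | nil =>
    intro hx _ hmem
    rw [Walk.support_nil, List.mem_singleton] at hmem
    exact absurd haA (hmem ▸ hx)
  | @cons x c z h p ih =>
    intro hx hav hmem
    by_cases hc : c ∈ A
    · have hca : c = a := hav c (by simp) hc
      exact ⟨x, RA.refl hx, hca ▸ h⟩
    · have ha' : a ∈ p.support := by
        rw [Walk.support_cons, List.mem_cons] at hmem
        rcases hmem with rfl | h'
        · exact absurd haA hx
        · exact h'
      obtain ⟨u, ⟨w', hw'⟩, hua⟩ := ih hc (fun v hv => hav v (by simp [hv])) ha'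
      refine ⟨u, ⟨Walk.cons h w', ?_⟩, hua⟩
      intro v hv
      rw [Walk.support_cons, List.mem_cons] at hv
      rcases hv with rfl | hv
      · exact hx
      · exact hw' v hv

/-- Existence of a cardinality-minimal separator. -/
lemma exists_min_sep [Fintype V] {x y : V} (hxy : x ≠ y) (hnadj : ¬ G.Adj x y) :
    ∃ A : Set V, Sep G A x y ∧ ∀ B : Set V, Sep G B x y → A.ncard ≤ B.ncard := by
  classical
  have hne : {A : Set V | Sep G A x y}.Nonempty := ⟨_, sep_exists hxy hnadj⟩
  obtain ⟨A, hA, hmin⟩ := Set.exists_min_image {A : Set V | Sep G A x y} Set.ncard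
    (Set.toFinite _) hne
  exact ⟨A, hA, hmin⟩

/-- Every vertex of a minimal separator has a neighbor in the component of `x`. -/
lemma min_sep_nbr [Fintype V] {x y : V} {A : Set V} (hA : Sep G A x y)
    (hmin : ∀ B : Set V, Sep G B x y → A.ncard ≤ B.ncard) {a : V} (ha : a ∈ A) :
    ∃ u, RA G A x u ∧ G.Adj u a := by
  classical
  have hcard : (A \ {a}).ncard < A.ncard := Set.ncard_diff_singleton_lt_of_mem ha (Set.toFinite _)
  have hnot : ¬ Sep G (A \ {a}) x y := fun h => absurd (hmin _ h) (by omega)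
  rw [Sep] at hnot
  push_neg at hnot
  obtain ⟨w, hw⟩ := hnot (fun h => hA.1 h.1) (fun h => hA.2.1 h.1)
  have hav : ∀ v ∈ w.support, v ∈ A → v = a := by
    intro v hv hvA
    by_contra hva
    exact (hw v hv) ⟨hvA, hva⟩
  obtain ⟨v, hv, hvA⟩ := hA.2.2 w
  have : a ∈ w.support := (hav v hv hvA) ▸ hv
  exact first_hit ha w hA.1 hav this

/-- A minimal-length walk subject to a support-monotone predicate. -/
lemma exists_min_walk {a b : V} (P : G.Walk a b → Prop)
    (hmono : ∀ (w q : G.Walk a b), (∀ v ∈ q.support, v ∈ w.support) → P w → P q)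
    (hex : ∃ w : G.Walk a b, P w) :
    ∃ p : G.Walk a b, p.IsPath ∧ P p ∧ ∀ q : G.Walk a b, P q → p.length ≤ q.length := by
  classical
  have hex' : ∃ n, ∃ w : G.Walk a b, w.length = n ∧ P w := by
    obtain ⟨w, hw⟩ := hex
    exact ⟨w.length, w, rfl, hw⟩
  obtain ⟨w0, hl0, hP0⟩ := Nat.find_spec hex'
  refine ⟨w0.bypass, w0.bypass_isPath, hmono w0 w0.bypass w0.support_bypass_subset hP0, ?_⟩
  intro q hq
  calc w0.bypass.length ≤ w0.length := w0.length_bypass_le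
    _ ≤ q.length := by
        rw [hl0]
        exact Nat.find_le ⟨q, rfl, hq⟩

/-- The component of `x` in `G - A`. -/
def Cset (G : SimpleGraph V) (A : Set V) (x : V) : Set V := {z | RA G A x z}

lemma reachable_induce_of_walk {Q : Set V} :
    ∀ {a b : V} (w : G.Walk a b) (_ : ∀ z ∈ w.support, z ∈ Q) (ha : a ∈ Q) (hb : b ∈ Q),
      (G.induce Q).Reachable ⟨a, ha⟩ ⟨b, hb⟩ := by
  intro a b w
  induction w with
  | nil => intro _ _ _; rfl
  | @cons a c b h p ih =>
    intro hw ha hb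
    have hc : c ∈ Q := hw c (by simp)
    have hadj : (G.induce Q).Adj ⟨a, ha⟩ ⟨c, hc⟩ := by
      simp only [comap_adj, Function.Embedding.coe_subtype]
      exact h
    exact hadj.reachable.trans (ih (fun z hz => hw z (by simp [hz])) hc hb)

lemma isCompOf_Cset (A : Set V) {x : V} (hx : x ∉ A) : IsCompOf G A (Cset G A x) := by
  refine ⟨Set.disjoint_left.mpr fun z hz => hz.notMem_end, ?_, ?_⟩
  · have : Nonempty (Cset G A x) := ⟨⟨x, RA.refl hx⟩⟩
    refine Connected.mk ?_
    rintro ⟨u, hu⟩ ⟨v, hv⟩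
    obtain ⟨wu, hwu⟩ := hu
    obtain ⟨wv, hwv⟩ := hv
    have hall : ∀ z ∈ (wu.reverse.append wv).support, z ∈ Cset G A x := by
      intro z hz
      rcases (Walk.mem_support_append_iff _ _).mp hz with h | h
      · rw [Walk.support_reverse, List.mem_reverse] at h
        exact ra_of_mem_support wu hwu h
      · exact ra_of_mem_support wv hwv h
    exact reachable_induce_of_walk (wu.reverse.append wv) hall _ _
  · intro u hu b hb hadj
    exact RA.adj hu hadj hb


lemma exists_walk_interior {A : Set V} {x a b ua ub : V}
    (hua : RA G A x ua) (hub : RA G A x ub) (haua : G.Adj ua a) (hbub : G.Adj ub b) :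
    ∃ w : G.Walk a b, ∀ v ∈ w.support, v = a ∨ v = b ∨ v ∈ Cset G A x := by
  obtain ⟨w1, hw1⟩ := hua
  obtain ⟨w2, hw2⟩ := hub
  refine ⟨Walk.cons haua.symm ((w1.reverse.append w2).concat hbub), ?_⟩
  intro v hv
  rw [Walk.support_cons, List.mem_cons] at hv
  rcases hv with rfl | hv
  · exact Or.inl rfl
  rw [Walk.support_concat, List.mem_append, List.mem_singleton] at hv
  rcases hv with hv | rfl
  · refine Or.inr (Or.inr ?_)
    rcases (Walk.mem_support_append_iff _ _).mp hv with h | h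
    · rw [Walk.support_reverse, List.mem_reverse] at h
      exact ra_of_mem_support w1 hw1 h
    · exact ra_of_mem_support w2 hw2 h
  · exact Or.inr (Or.inl rfl)

lemma min_sep_clique [Fintype V] (hch : Chordal G) {x y : V} (hxy : x ≠ y)
    (hnadj : ¬ G.Adj x y) {A : Set V} (hA : Sep G A x y)
    (hmin : ∀ B : Set V, Sep G B x y → A.ncard ≤ B.ncard) :
    G.IsClique A := by
  classical
  intro a ha b hb hab
  by_contra hadj
  set Cx := Cset G A x with hCxdef
  set Cy := Cset G A y with hCydef
  have hdisj : ∀ z, z ∈ Cx → z ∉ Cy := fun z hzx hzy => hA.not_ra (hzx.trans hzy.symm)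
  have hCxA : ∀ z ∈ Cx, z ∉ A := fun z hz => RA.notMem_end hz
  have hCyA : ∀ z ∈ Cy, z ∉ A := fun z hz => RA.notMem_end hz
  -- neighbors of a and b in both components
  obtain ⟨ua, hua, huaa⟩ := min_sep_nbr hA hmin ha
  obtain ⟨ub, hub, hubb⟩ := min_sep_nbr hA hmin hb
  have hA' := hA.symm
  have hmin' : ∀ B : Set V, Sep G B y x → A.ncard ≤ B.ncard := fun B h => hmin B h.symm
  obtain ⟨va, hva, hvaa⟩ := min_sep_nbr hA' hmin' ha
  obtain ⟨vb, hvb, hvbb⟩ := min_sep_nbr hA' hmin' hb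
  -- minimal paths through each component
  obtain ⟨p1, hp1path, hp1P, hp1min⟩ := exists_min_walk
    (fun w : G.Walk a b => ∀ v ∈ w.support, v = a ∨ v = b ∨ v ∈ Cx)
    (fun w q hsub hw v hv => hw v (hsub v hv))
    (exists_walk_interior hua hub huaa hubb)
  obtain ⟨p2, hp2path, hp2P, hp2min⟩ := exists_min_walk
    (fun w : G.Walk a b => ∀ v ∈ w.support, v = a ∨ v = b ∨ v ∈ Cy)
    (fun w q hsub hw v hv => hw v (hsub v hv))
    (exists_walk_interior hva hvb hvaa hvbb)
  have hnoedge1 : s(a, b) ∉ p1.edges := fun h => hadj (p1.adj_of_mem_edges h)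
  have hnoedge2 : s(a, b) ∉ p2.edges := fun h => hadj (p2.adj_of_mem_edges h)
  have h2x : 2 ≤ p1.length := two_le_length p1 hab hnoedge1
  have h2y : 2 ≤ p2.length := two_le_length p2 hab hnoedge2
  -- combining helper
  have hcomb : ∀ u, (u = a ∨ u = b ∨ u ∈ Cx) → (u = a ∨ u = b ∨ u ∈ Cy) → u = a ∨ u = b := by
    intro u h1 h2
    rcases h1 with rfl | rfl | h1
    · exact Or.inl rfl
    · exact Or.inr rfl
    rcases h2 with rfl | rfl | h2
    · exact absurd ha (hCxA _ h1)
    · exact absurd hb (hCxA _ h1)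
    · exact absurd h2 (hdisj u h1)
  -- the cycle
  set c : G.Walk a a := p1.append p2.reverse with hcdef
  have hclen : c.length = p1.length + p2.length := by
    rw [hcdef, Walk.length_append, Walk.length_reverse]
  have h4 : 4 ≤ c.length := by omega
  have hcedges : c.edges = p1.edges ++ p2.reverse.edges := Walk.edges_append _ _
  have hmem2rev : ∀ z, z ∈ p2.reverse.support ↔ z ∈ p2.support := by
    intro z; rw [Walk.support_reverse, List.mem_reverse]
  have hcsup : ∀ z, z ∈ c.support ↔ z ∈ p1.support ∨ z ∈ p2.support := by
    intro z
    rw [hcdef, Walk.mem_support_append_iff, hmem2rev]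
  -- trail
  have htrail : c.IsTrail := by
    constructor
    rw [hcedges]
    refine List.Nodup.append hp1path.isTrail.edges_nodup hp2path.reverse.isTrail.edges_nodup ?_
    intro e he1 he2
    rw [Walk.edges_reverse, List.mem_reverse] at he2
    induction e using Sym2.ind with
    | _ u v =>
      have huv : G.Adj u v := p1.adj_of_mem_edges he1
      have hu : u = a ∨ u = b := hcomb u
        (hp1P u (p1.fst_mem_support_of_mem_edges he1))
        (hp2P u (p2.fst_mem_support_of_mem_edges he2))
      have hv : v = a ∨ v = b := hcomb v
        (hp1P v (p1.snd_mem_support_of_mem_edges he1))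
        (hp2P v (p2.snd_mem_support_of_mem_edges he2))
      rcases hu with rfl | rfl <;> rcases hv with rfl | rfl
      · exact huv.ne rfl
      · exact hadj huv
      · exact hadj huv.symm
      · exact huv.ne rfl
  -- support nodup
  obtain ⟨t1, ht1⟩ : ∃ t1, p1.support = a :: t1 := ⟨_, p1.support_eq_cons⟩
  obtain ⟨t2, ht2⟩ : ∃ t2, p2.reverse.support = b :: t2 := ⟨_, p2.reverse.support_eq_cons⟩
  have hnd1 : t1.Nodup ∧ a ∉ t1 := by
    have := hp1path.support_nodup
    rw [ht1, List.nodup_cons] at this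
    exact ⟨this.2, this.1⟩
  have hnd2 : t2.Nodup ∧ b ∉ t2 := by
    have := hp2path.reverse.support_nodup
    rw [ht2, List.nodup_cons] at this
    exact ⟨this.2, this.1⟩
  have hct : c.support.tail = t1 ++ t2 := by
    rw [hcdef, Walk.support_append, ht1, ht2]
    simp
  have hcyc : c.IsCycle := by
    refine ⟨⟨htrail, ?_⟩, ?_⟩
    · intro h
      rw [h] at hclen
      simp at hclen
      omega
    · rw [hct]
      refine List.Nodup.append hnd1.1 hnd2.1 ?_
      intro z hz1 hz2
      have hz1' : z ∈ p1.support := by rw [ht1]; exact List.mem_cons_of_mem _ hz1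
      have hz2' : z ∈ p2.support := by
        rw [← hmem2rev, ht2]
        exact List.mem_cons_of_mem _ hz2
      have hzc := hcomb z (hp1P z hz1') (hp2P z hz2')
      rcases hzc with rfl | rfl
      · exact hnd1.2 hz1
      · exact hnd2.2 hz2
  -- apply chordality
  obtain ⟨u, v, hus, hvs, huv, hce⟩ := hch c hcyc h4
  -- edge exclusions
  have he1 : s(u, v) ∉ p1.edges := fun h => hce (by rw [hcedges]; exact List.mem_append_left _ h)
  have he2 : s(u, v) ∉ p2.edges := by
    intro h
    refine hce ?_
    rw [hcedges]
    refine List.mem_append_right _ ?_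
    rw [Walk.edges_reverse, List.mem_reverse]
    exact h
  -- membership transfer
  have hx_to_p1 : ∀ z, z ∈ c.support → (z = a ∨ z = b ∨ z ∈ Cx) → z ∈ p1.support := by
    intro z hz hzx
    rcases (hcsup z).mp hz with h | h
    · exact h
    · rcases hcomb z hzx (hp2P z h) with rfl | rfl
      · exact p1.start_mem_support
      · exact p1.end_mem_support
  have hy_to_p2 : ∀ z, z ∈ c.support → (z = a ∨ z = b ∨ z ∈ Cy) → z ∈ p2.support := by
    intro z hz hzy
    rcases (hcsup z).mp hz with h | h
    · rcases hcomb z (hp1P z h) hzy with rfl | rfl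
      · exact p2.start_mem_support
      · exact p2.end_mem_support
    · exact h
  have hclass : ∀ z, z ∈ c.support → (z = a ∨ z = b) ∨ z ∈ Cx ∨ z ∈ Cy := by
    intro z hz
    rcases (hcsup z).mp hz with h | h
    · rcases hp1P z h with rfl | rfl | h'
      · exact Or.inl (Or.inl rfl)
      · exact Or.inl (Or.inr rfl)
      · exact Or.inr (Or.inl h')
    · rcases hp2P z h with rfl | rfl | h'
      · exact Or.inl (Or.inl rfl)
      · exact Or.inl (Or.inr rfl)
      · exact Or.inr (Or.inr h')
  -- contradiction makers
  have contra1 : u ∈ p1.support → v ∈ p1.support → False := by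
    intro hu hv
    obtain ⟨q, hql, hqs⟩ := exists_shorter p1 hu hv huv he1
    have := hp1min q (fun z hz => hp1P z (hqs z hz))
    omega
  have contra2 : u ∈ p2.support → v ∈ p2.support → False := by
    intro hu hv
    obtain ⟨q, hql, hqs⟩ := exists_shorter p2 hu hv huv he2
    have := hp2min q (fun z hz => hp2P z (hqs z hz))
    omega
  have hmix : ∀ w1 w2, w1 ∈ Cx → w2 ∈ Cy → G.Adj w1 w2 → False := by
    intro w1 w2 h1 h2 hadj12
    exact hdisj w2 (h1.adj hadj12 (hCyA w2 h2)) h2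
  have habp1 : ∀ z, z = a ∨ z = b → z ∈ p1.support := by
    rintro z (rfl | rfl)
    · exact p1.start_mem_support
    · exact p1.end_mem_support
  have habp2 : ∀ z, z = a ∨ z = b → z ∈ p2.support := by
    rintro z (rfl | rfl)
    · exact p2.start_mem_support
    · exact p2.end_mem_support
  rcases hclass u hus with hu | hu | hu
  · rcases hclass v hvs with hv | hv | hv
    · exact contra1 (habp1 u hu) (habp1 v hv)
    · exact contra1 (habp1 u hu) (hx_to_p1 v hvs (Or.inr (Or.inr hv)))
    · exact contra2 (habp2 u hu) (hy_to_p2 v hvs (Or.inr (Or.inr hv)))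
  · rcases hclass v hvs with hv | hv | hv
    · exact contra1 (hx_to_p1 u hus (Or.inr (Or.inr hu))) (habp1 v hv)
    · exact contra1 (hx_to_p1 u hus (Or.inr (Or.inr hu))) (hx_to_p1 v hvs (Or.inr (Or.inr hv)))
    · exact hmix u v hu hv huv
  · rcases hclass v hvs with hv | hv | hv
    · exact contra2 (hy_to_p2 u hus (Or.inr (Or.inr hu))) (habp2 v hv)
    · exact hmix v u hv hu huv.symm
    · exact contra2 (hy_to_p2 u hus (Or.inr (Or.inr hu))) (hy_to_p2 v hvs (Or.inr (Or.inr hv)))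

lemma cset_subset_Q {S Q : Set V} (hQ : IsCompOf G S Q) {x y : V} {A : Set V}
    (hx : x ∈ Q) (hA : Sep G A x y)
    (hy : ∀ s ∈ setNbhd G Q, s = y ∨ G.Adj s y) :
    Cset G A x ⊆ Q := by
  have key : ∀ {p z : V} (w : G.Walk p z), p ∈ Q → RA G A x p →
      (∀ v ∈ w.support, v ∉ A) → z ∈ Q := by
    intro p z w
    induction w with
    | nil => intro hp _ _; exact hp
    | @cons p t z h w ih =>
      intro hp hxp hav
      have htA : t ∉ A := hav t (by simp)
      have hxt : RA G A x t := hxp.adj h htA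
      have htQ : t ∈ Q := by
        by_cases htS : t ∈ S
        · exfalso
          have htN : t ∈ setNbhd G Q := ⟨fun htQ => Set.disjoint_left.mp hQ.1 htQ htS, p, hp, h⟩
          rcases hy t htN with rfl | hty
          · exact hA.not_ra hxt
          · exact hA.not_ra (hxt.adj hty hA.2.1)
        · exact hQ.2.2 p hp t htS h
      exact ih htQ hxt (fun v hv => hav v (by simp [hv]))
  rintro z ⟨w, hw⟩
  exact key w hx (RA.refl hA.1) hw

lemma main [Fintype V] (hch : Chordal G) :
    ∀ (n : ℕ) (S Q : Set V), G.IsClique S → IsCompOf G S Q → Q.ncard ≤ n →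
      ∃ v ∈ Q, IsSimplicial G v := by
  intro n
  induction n with
  | zero =>
    intro S Q _ hQ hcard
    exfalso
    have h1 : Q.Nonempty := Set.nonempty_coe_sort.mp hQ.2.1.nonempty
    have h2 : 0 < Q.ncard := (Set.ncard_pos (Set.toFinite Q)).mpr h1
    omega
  | succ n ih =>
    intro S Q hS hQ hcard
    set N := setNbhd G Q with hN
    have hNS : ∀ s ∈ N, s ∈ S := by
      intro s hs
      by_contra hsS
      obtain ⟨hsQ, a, haQ, hadj⟩ := hs
      exact hsQ (hQ.2.2 a haQ s hsS hadj)
    have hQS : Disjoint Q S := hQ.1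
    have hQN : ∀ z ∈ Q, z ∉ N := fun z hz hn => hn.1 hz
    by_cases hcl : ∀ u ∈ Q ∪ N, ∀ v ∈ Q ∪ N, u ≠ v → G.Adj u v
    · obtain ⟨⟨v, hv⟩⟩ := hQ.2.1.nonempty
      refine ⟨v, hv, ?_⟩
      intro p q hvp hvq hpq
      have hmem : ∀ w, G.Adj v w → w ∈ Q ∪ N := by
        intro w hw
        by_cases hwS : w ∈ S
        · exact Or.inr ⟨fun hwQ => Set.disjoint_left.mp hQS hwQ hwS, v, hv, hw⟩
        · exact Or.inl (hQ.2.2 v hv w hwS hw)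
      exact hcl p (hmem p hvp) q (hmem q hvq) hpq
    · push_neg at hcl
      obtain ⟨u0, hu0, v0, hv0, hne0, hnadj0⟩ := hcl
      have hsel : ∃ x y, x ∈ Q ∧ x ≠ y ∧ ¬ G.Adj x y ∧ (∀ s ∈ N, s = y ∨ G.Adj s y) ∧
          ∃ q0 ∈ Q, q0 = y ∨ G.Adj q0 y := by
        by_cases hc : ∃ s ∈ N, ∃ t ∈ Q, ¬ G.Adj s t
        · obtain ⟨s, hsN, t, htQ, hst⟩ := hc
          have hsN' := hsN
          obtain ⟨hsQ, a0, ha0Q, ha0s⟩ := hsN'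
          refine ⟨t, s, htQ, fun h => (hQN t htQ) (h ▸ hsN), fun h => hst h.symm, ?_,
            a0, ha0Q, Or.inr ha0s⟩
          intro r hr
          by_cases hrs : r = s
          · exact Or.inl hrs
          · exact Or.inr (hS (hNS r hr) (hNS s hsN) hrs)
        · push_neg at hc
          have huv : u0 ∈ Q ∧ v0 ∈ Q := by
            constructor
            · rcases hu0 with h | h
              · exact h
              · exfalso
                rcases hv0 with h' | h'
                · exact hnadj0 (hc u0 h v0 h')
                · exact hnadj0 (hS (hNS _ h) (hNS _ h') hne0)
            · rcases hv0 with h | h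
              · exact h
              · exfalso
                rcases hu0 with h' | h'
                · exact hnadj0 ((hc v0 h u0 h').symm)
                · exact hnadj0 (hS (hNS _ h') (hNS _ h) hne0)
          exact ⟨u0, v0, huv.1, hne0, hnadj0, fun s hs => Or.inr (hc s hs v0 huv.2),
            v0, huv.2, Or.inl rfl⟩
      obtain ⟨x, y, hxQ, hxy, hnadj, hy, q0, hq0Q, hq0y⟩ := hsel
      obtain ⟨A, hA, hmin⟩ := exists_min_sep hxy hnadj
      have hAcl : G.IsClique A := min_sep_clique hch hxy hnadj hA hmin
      have hcomp : IsCompOf G A (Cset G A x) := isCompOf_Cset A hA.1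
      have hsub : Cset G A x ⊆ Q := cset_subset_Q hQ hxQ hA hy
      have hq0n : q0 ∉ Cset G A x := by
        intro h
        rcases hq0y with rfl | hadj
        · exact hA.not_ra h
        · exact hA.not_ra (RA.adj h hadj hA.2.1)
      have hlt : (Cset G A x).ncard < Q.ncard := by
        refine Set.ncard_lt_ncard ?_ (Set.toFinite Q)
        rw [Set.ssubset_iff_subset_ne]
        exact ⟨hsub, fun h => hq0n (h ▸ hq0Q)⟩
      obtain ⟨v, hvC, hvs⟩ := ih A (Cset G A x) hAcl hcomp (by omega)
      exact ⟨v, hsub hvC, hvs⟩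

end ChordalAux


/-- If `G` is a connected chordal graph and `S` a clique with `V(G) ∖ S` nonempty,
then every connected component of `G − S` contains a simplicial vertex of `G`. -/
theorem stmt10 {V : Type*} [Fintype V] (G : SimpleGraph V)
    (hch : Chordal G) (hconn : G.Connected) (S : Set V) (hS : G.IsClique S)
    (hne : (Sᶜ : Set V).Nonempty) :
    ∀ Q : Set V, IsCompOf G S Q → ∃ v ∈ Q, IsSimplicial G v := by
  intro Q hQ
  exact ChordalAux.main hch Q.ncard S Q hS hQ le_rfl
end

section
/- Let G be a Hamiltonian chordal graph, C a cycle of G that is not extendable, Q a connected component of G − V(C), and S = N(Q) the set of vertices outside Q with a neighbor in Q. If two vertices x, y ∈ S are adjacent in G and have no common neighbor in Q, then G contains an induced cycle of length at least 4 (contradiction); hence any two adjacent vertices of S have a common neighbor in Q. -/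
open SimpleGraph

open SimpleGraph.Walk in
lemma shortcut' {V : Type*} {G : SimpleGraph V} [DecidableEq V] {a b : V} (P : G.Walk a b) :
    ∀ {u v : V}, u ∈ P.support → v ∈ P.support → G.Adj u v → s(u, v) ∉ P.edges →
      ∃ W : G.Walk a b, (∀ z ∈ W.support, z ∈ P.support) ∧ W.length < P.length := by
  induction P with
  | nil =>
    intro u v hu hv huv _
    simp only [support_nil, List.mem_singleton] at hu hv
    subst hu; subst hv; exact absurd rfl huv.ne
  | @cons a c b h p ih =>
    intro u v hu hv huv hne
    rw [support_cons, List.mem_cons] at hu hv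
    have hne' : s(u, v) ∉ p.edges := fun h' => hne (by simp [edges_cons, h'])
    rcases hu with rfl | hu
    · rcases hv with rfl | hv
      · exact absurd rfl huv.ne
      · have hcv : c ≠ v := by rintro rfl; exact hne (by simp)
        refine ⟨Walk.cons huv (p.dropUntil v hv), ?_, ?_⟩
        · intro z hz
          rw [support_cons, List.mem_cons] at hz ⊢
          exact hz.imp id fun hz => support_dropUntil_subset p hv hz
        · have h2 := congrArg Walk.length (p.take_spec hv)
          rw [length_append] at h2
          have h3 : 0 < (p.takeUntil v hv).length :=
            Nat.pos_of_ne_zero (fun h0 => hcv (Walk.eq_of_length_eq_zero h0))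
          simp only [length_cons]
          omega
    · rcases hv with rfl | hv
      · have hcu : c ≠ u := by rintro rfl; exact hne (by simp [Sym2.eq_swap])
        refine ⟨Walk.cons huv.symm (p.dropUntil u hu), ?_, ?_⟩
        · intro z hz
          rw [support_cons, List.mem_cons] at hz ⊢
          exact hz.imp id fun hz => support_dropUntil_subset p hu hz
        · have h2 := congrArg Walk.length (p.take_spec hu)
          rw [length_append] at h2
          have h3 : 0 < (p.takeUntil u hu).length :=
            Nat.pos_of_ne_zero (fun h0 => hcu (Walk.eq_of_length_eq_zero h0))
          simp only [length_cons]
          omega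
      · obtain ⟨W, hWs, hWl⟩ := ih hu hv huv hne'
        refine ⟨Walk.cons h W, ?_, ?_⟩
        · intro z hz
          rw [support_cons, List.mem_cons] at hz ⊢
          exact hz.imp id fun hz => hWs z hz
        · simp only [length_cons]; omega

theorem stmt11_aux {V : Type*} [Fintype V] [DecidableEq V] (G : SimpleGraph V)
    (hch : Chordal G)
    (Q : Set V) (hQconn : (G.induce Q).Connected)
    (x y : V) (hx : x ∈ setNbhd G Q) (hy : y ∈ setNbhd G Q) (hxy : G.Adj x y) :
    ∃ w ∈ Q, G.Adj x w ∧ G.Adj y w := by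
  by_contra hcon
  push_neg at hcon
  obtain ⟨hxQ, a0, ha0Q, ha0x⟩ := hx
  obtain ⟨hyQ, b0, hb0Q, hb0y⟩ := hy
  set T : Set ℕ := {n | ∃ (a b : V) (W : G.Walk a b), a ∈ Q ∧ b ∈ Q ∧ G.Adj x a ∧ G.Adj y b ∧
    (∀ z ∈ W.support, z ∈ Q) ∧ W.length = n} with hT
  -- T is nonempty
  have hTne : T.Nonempty := by
    obtain ⟨W0⟩ := hQconn.preconnected ⟨a0, ha0Q⟩ ⟨b0, hb0Q⟩
    let f : G.induce Q →g G := ⟨Subtype.val, fun h => h⟩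
    refine ⟨(W0.map f).length, a0, b0, W0.map f, ha0Q, hb0Q, ha0x.symm, hb0y.symm, ?_, rfl⟩
    intro z hz
    rw [Walk.support_map, List.mem_map] at hz
    obtain ⟨w, _, rfl⟩ := hz
    exact w.2
  set n := sInf T with hn
  have hmin : ∀ m ∈ T, n ≤ m := fun m hm => Nat.sInf_le hm
  obtain ⟨a, b, W, haQ, hbQ, hxa, hyb, hWQ, hWlen⟩ := Nat.sInf_mem hTne
  set P := W.bypass with hPdef
  have hP : P.IsPath := W.bypass_isPath
  have hPQ : ∀ z ∈ P.support, z ∈ Q := fun z hz => hWQ z (W.support_bypass_subset hz)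
  have hPlen : P.length = n := by
    have h1 : P.length ≤ W.length := hPdef ▸ W.length_bypass_le
    have h2 : n ≤ P.length := hmin _ ⟨a, b, P, haQ, hbQ, hxa, hyb, hPQ, rfl⟩
    rw [hn] at h2 ⊢
    omega
  have hxney : x ≠ y := hxy.ne
  have hab : a ≠ b := by rintro rfl; exact hcon a haQ hxa hyb
  have hnpos : 1 ≤ n := by
    rcases Nat.eq_zero_or_pos n with h0 | h; swap; · exact h
    exact absurd (Walk.eq_of_length_eq_zero (hPlen.trans h0)) hab
  have hxP : x ∉ P.support := fun h => hxQ (hPQ x h)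
  have hyP : y ∉ P.support := fun h => hyQ (hPQ y h)
  set Pt : G.Walk a x := P.append (Walk.cons hyb.symm (Walk.cons hxy.symm Walk.nil)) with hPtdef
  have hPt_support : Pt.support = P.support ++ [y, x] := by
    simp [hPtdef, Walk.support_append]
  have hPt_edges : Pt.edges = P.edges ++ [s(b, y), s(y, x)] := by
    simp [hPtdef, Walk.edges_append]
  have hPtpath : Pt.IsPath := by
    rw [Walk.isPath_def, hPt_support, List.nodup_append]
    refine ⟨hP.support_nodup, by simp [hxney.symm], ?_⟩
    intro z hz w hz2 hzw; subst hzw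
    simp only [List.mem_cons, List.mem_singleton, List.not_mem_nil, or_false] at hz2
    rcases hz2 with rfl | rfl
    · exact hyP hz
    · exact hxP hz
  have hxa_ne : s(x, a) ∉ Pt.edges := by
    rw [hPt_edges]
    intro hmem
    rw [List.mem_append] at hmem
    rcases hmem with hmem | hmem
    · exact hxP (P.fst_mem_support_of_mem_edges hmem)
    · simp only [List.mem_cons, List.mem_singleton, List.not_mem_nil, or_false] at hmem
      rcases hmem with hmem | hmem
      · rw [Sym2.eq_iff] at hmem
        rcases hmem with ⟨h1, h2⟩ | ⟨h1, h2⟩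
        · exact hxQ (h1 ▸ hbQ)
        · exact hxney h1
      · rw [Sym2.eq_iff] at hmem
        rcases hmem with ⟨h1, h2⟩ | ⟨h1, h2⟩
        · exact hxney h1
        · exact hyQ (h2 ▸ haQ)
  set c' : G.Walk x x := Walk.cons hxa Pt with hc'def
  have hcyc : c'.IsCycle := (Walk.cons_isCycle_iff Pt hxa).mpr ⟨hPtpath, hxa_ne⟩
  have hc'_len : c'.length = P.length + 3 := by
    simp [hc'def, hPtdef, Walk.length_append]
  have hc'_support : c'.support = x :: (P.support ++ [y, x]) := by
    rw [hc'def, Walk.support_cons, hPt_support]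
  have hc'_edges : c'.edges = s(x, a) :: (P.edges ++ [s(b, y), s(y, x)]) := by
    rw [hc'def, Walk.edges_cons, hPt_edges]
  obtain ⟨x', y', hx's, hy's, hadj', hne'⟩ := hch c' hcyc (by omega)
  have hmem : ∀ z ∈ c'.support, z = x ∨ z = y ∨ z ∈ P.support := by
    intro z hz
    rw [hc'_support] at hz
    simp only [List.mem_cons, List.mem_append, List.mem_singleton, List.not_mem_nil,
      or_false] at hz
    tauto
  -- chord from x to a vertex of P
  have hchordX : ∀ q, q ∈ P.support → G.Adj x q → s(x, q) ∉ c'.edges → False := by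
    intro q hqP hxq hne2
    have hqa : q ≠ a := by
      rintro rfl
      exact hne2 (by rw [hc'_edges]; exact List.mem_cons_self)
    have hmemT : (P.dropUntil q hqP).length ∈ T :=
      ⟨q, b, P.dropUntil q hqP, hPQ q hqP, hbQ, hxq, hyb,
        fun z hz => hPQ z (P.support_dropUntil_subset hqP hz), rfl⟩
    have h1 := hmin _ hmemT
    have h2 := congrArg Walk.length (P.take_spec hqP)
    rw [Walk.length_append] at h2
    have h3 : 0 < (P.takeUntil q hqP).length :=
      Nat.pos_of_ne_zero (fun h0 => hqa (Walk.eq_of_length_eq_zero h0).symm)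
    omega
  -- chord from y to a vertex of P
  have hchordY : ∀ q, q ∈ P.support → G.Adj y q → s(y, q) ∉ c'.edges → False := by
    intro q hqP hyq hne2
    have hqb : q ≠ b := by
      rintro rfl
      exact hne2 (by rw [hc'_edges]; simp [Sym2.eq_swap])
    have hmemT : (P.takeUntil q hqP).length ∈ T :=
      ⟨a, q, P.takeUntil q hqP, haQ, hPQ q hqP, hxa, hyq,
        fun z hz => hPQ z (P.support_takeUntil_subset hqP hz), rfl⟩
    have h1 := hmin _ hmemT
    have h2 := congrArg Walk.length (P.take_spec hqP)
    rw [Walk.length_append] at h2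
    have h3 : 0 < (P.dropUntil q hqP).length :=
      Nat.pos_of_ne_zero (fun h0 => hqb (Walk.eq_of_length_eq_zero h0))
    omega
  -- chord inside P
  have hchordQQ : ∀ u v, u ∈ P.support → v ∈ P.support → G.Adj u v →
      s(u, v) ∉ c'.edges → False := by
    intro u v hu hv huv hne2
    have hne2' : s(u, v) ∉ P.edges := fun h' => hne2 (by rw [hc'_edges]; simp [h'])
    obtain ⟨W', hW's, hW'l⟩ := shortcut' P hu hv huv hne2'
    have hmemT : W'.length ∈ T :=
      ⟨a, b, W', haQ, hbQ, hxa, hyb, fun z hz => hPQ z (hW's z hz), rfl⟩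
    have h1 := hmin _ hmemT
    omega
  have hxyE : s(x, y) ∈ c'.edges := by rw [hc'_edges]; simp [Sym2.eq_swap]
  rcases hmem x' hx's with rfl | rfl | hqx <;> rcases hmem y' hy's with rfl | rfl | hqy
  · exact hadj'.ne rfl
  · exact hne' hxyE
  · exact hchordX y' hqy hadj' hne'
  · exact hne' (by simpa [Sym2.eq_swap] using hxyE)
  · exact hadj'.ne rfl
  · exact hchordY y' hqy hadj' hne'
  · exact hchordX x' hqx hadj'.symm (by rwa [Sym2.eq_swap])
  · exact hchordY x' hqx hadj'.symm (by rwa [Sym2.eq_swap])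
  · exact hchordQQ x' y' hqx hqy hadj' hne'

/-- In a Hamiltonian chordal graph, if `C` is a nonextendable cycle, `Q` a connected
component of `G − V(C)` and `S = N(Q)`, then any two adjacent vertices of `S` have a
common neighbor in `Q`. -/
theorem stmt11 {V : Type*} [Fintype V] [DecidableEq V] (G : SimpleGraph V)
    (hH : G.IsHamiltonian) (hch : Chordal G)
    {v : V} (c : G.Walk v v) (hc : c.IsCycle) (hne : ¬ CycleExtendable G c)
    (Q : Set V) (hQ : IsCompOf G {x | x ∈ c.support} Q)
    (x y : V) (hx : x ∈ setNbhd G Q) (hy : y ∈ setNbhd G Q) (hxy : G.Adj x y) :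
    ∃ w ∈ Q, G.Adj x w ∧ G.Adj y w :=
  stmt11_aux G hch Q hQ.2.1 x y hx hy hxy
end

section
/- Let G be a chordal graph, C a nonextendable cycle of G, Q a connected component of G − V(C), and S = N(Q). Then no two vertices of S are consecutive on C; that is, no edge of C joins two vertices of S. -/
open SimpleGraph

section Helpers

variable {V : Type*} {G : SimpleGraph V}

lemma edge_of_length_one_s12 {a b : V} (w : G.Walk a b) (h : w.length = 1) :
    s(a, b) ∈ w.edges := by
  cases w with
  | nil => simp at h
  | cons h' r =>
    simp only [SimpleGraph.Walk.length_cons] at h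
    have h0 : r.length = 0 := by omega
    have := SimpleGraph.Walk.eq_of_length_eq_zero h0
    subst this
    simp

lemma mid_of_length_two {a b : V} (w : G.Walk a b) (h : w.length = 2) :
    ∃ m, G.Adj a m ∧ G.Adj m b := by
  cases w with
  | nil => simp at h
  | cons h1 r =>
    cases r with
    | nil => simp at h
    | cons h2 r2 =>
      simp only [SimpleGraph.Walk.length_cons] at h
      have h0 : r2.length = 0 := by omega
      have := SimpleGraph.Walk.eq_of_length_eq_zero h0
      subst this
      exact ⟨_, h1, h2⟩

lemma second_of_edge {a b z : V} (q : G.Walk a b) (hq : q.IsPath) (he : s(a, z) ∈ q.edges) :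
    ∃ (h : G.Adj a z) (q' : G.Walk z b), q = SimpleGraph.Walk.cons h q' := by
  cases q with
  | nil => simp at he
  | cons h' r =>
    rw [SimpleGraph.Walk.edges_cons, List.mem_cons] at he
    rcases he with he | he
    · rw [Sym2.eq_iff] at he
      rcases he with ⟨-, rfl⟩ | ⟨h1, rfl⟩
      · exact ⟨h', r, rfl⟩
      · exact absurd h1 h'.ne
    · exact absurd (SimpleGraph.Walk.fst_mem_support_of_mem_edges r he)
        ((SimpleGraph.Walk.cons_isPath_iff _ _).mp hq).2

lemma mem_support_iff_mem_tail {u : V} (p : G.Walk u u) (hp : p ≠ SimpleGraph.Walk.nil) :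
    ∀ z, z ∈ p.support ↔ z ∈ p.support.tail := by
  cases p with
  | nil => exact absurd rfl hp
  | cons h r =>
    intro z
    simp only [SimpleGraph.Walk.support_cons, List.tail_cons, List.mem_cons]
    constructor
    · rintro (rfl | hz)
      · exact r.end_mem_support
      · exact hz
    · exact Or.inr

lemma mem_support_rotate' {u x : V} [DecidableEq V] {c : G.Walk u u} (hc : c.IsCycle)
    (hx : x ∈ c.support) : ∀ z, z ∈ (c.rotate x hx).support ↔ z ∈ c.support := by
  intro z
  rw [mem_support_iff_mem_tail (c.rotate x hx) (hc.rotate hx).ne_nil z,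
      mem_support_iff_mem_tail c hc.ne_nil z]
  exact (SimpleGraph.Walk.support_rotate c x hx).mem_iff

lemma isCycle_reverse {u : V} {p : G.Walk u u} (hp : p.IsCycle) : p.reverse.IsCycle := by
  cases p with
  | nil => exact absurd rfl hp.ne_nil
  | cons h r =>
    constructor
    · constructor
      · exact SimpleGraph.Walk.IsTrail.reverse _ hp.isCircuit.isTrail
      · intro hcontra
        have := congrArg SimpleGraph.Walk.length hcontra
        rw [SimpleGraph.Walk.length_reverse] at this
        simp at this
    · rw [SimpleGraph.Walk.support_reverse, List.tail_reverse,
        List.nodup_reverse]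
      have ht : r.support.Nodup := by simpa using hp.support_nodup
      have hlast : r.support.getLast r.support_ne_nil = u := r.getLast_support
      have hsplit : r.support.dropLast ++ [u] = r.support := by
        conv_rhs => rw [← List.dropLast_append_getLast r.support_ne_nil]
        rw [hlast]
      have hd2 : (SimpleGraph.Walk.cons h r).support.dropLast = u :: r.support.dropLast := by
        rw [SimpleGraph.Walk.support_cons]
        cases hs : r.support with
        | nil => exact absurd hs r.support_ne_nil
        | cons a l => simp
      rw [hd2, List.nodup_cons]
      rw [← hsplit] at ht
      rcases List.nodup_append.mp ht with ⟨h1, -, h3⟩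
      exact ⟨fun hm => h3 _ hm _ (List.mem_singleton.mpr rfl) rfl, h1⟩

lemma cycle_start_edge {x y : V} (d : G.Walk x x) (hd : d.IsCycle) (he : s(x, y) ∈ d.edges) :
    ∃ e : G.Walk x x, e.IsCycle ∧ (∀ z, z ∈ e.support ↔ z ∈ d.support) ∧
      ∃ (h : G.Adj x y) (p : G.Walk y x), e = SimpleGraph.Walk.cons h p := by
  cases d with
  | nil => simp at he
  | cons h' r =>
    rw [SimpleGraph.Walk.edges_cons, List.mem_cons] at he
    rcases he with he | he
    · rw [Sym2.eq_iff] at he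
      rcases he with ⟨-, rfl⟩ | ⟨h1, rfl⟩
      · exact ⟨SimpleGraph.Walk.cons h' r, hd, fun z => Iff.rfl, h', r, rfl⟩
      · exact absurd h1 h'.ne
    · have hr := (SimpleGraph.Walk.cons_isCycle_iff r h').mp hd
      have herev : s(x, y) ∈ r.reverse.edges := by
        rw [SimpleGraph.Walk.edges_reverse, List.mem_reverse]; exact he
      obtain ⟨hxy, q', hq'⟩ := second_of_edge r.reverse hr.1.reverse herev
      refine ⟨(SimpleGraph.Walk.cons h' r).reverse, isCycle_reverse hd, ?_, hxy,
        q'.append (SimpleGraph.Walk.cons h'.symm SimpleGraph.Walk.nil), ?_⟩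
      · intro z; rw [SimpleGraph.Walk.support_reverse, List.mem_reverse]
      · rw [SimpleGraph.Walk.reverse_cons, hq', SimpleGraph.Walk.cons_append]

lemma extendable_of_adj [DecidableEq V] {u x y w : V} (c : G.Walk u u) (hc : c.IsCycle)
    (he : s(x, y) ∈ c.edges) (hw : w ∉ c.support)
    (h1 : G.Adj x w) (h2 : G.Adj w y) : CycleExtendable G c := by
  have hxc : x ∈ c.support := SimpleGraph.Walk.fst_mem_support_of_mem_edges c he
  have hdcyc : (c.rotate x hxc).IsCycle := hc.rotate hxc
  have hdsup := mem_support_rotate' hc hxc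
  have hde : s(x, y) ∈ (c.rotate x hxc).edges := (c.rotate_edges x hxc).mem_iff.mpr he
  obtain ⟨e, hecyc, hesup, hxy, p, rfl⟩ := cycle_start_edge _ hdcyc hde
  have hp := (SimpleGraph.Walk.cons_isCycle_iff p hxy).mp hecyc
  have hsup : ∀ z, z ∈ p.support → z ∈ c.support := by
    intro z hz
    exact (hdsup z).mp ((hesup z).mp (by simp [SimpleGraph.Walk.support_cons, hz]))
  have hwp : w ∉ p.support := fun hm => hw (hsup w hm)
  have hcyc' : (SimpleGraph.Walk.cons h1 (SimpleGraph.Walk.cons h2 p)).IsCycle := by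
    rw [SimpleGraph.Walk.cons_isCycle_iff]
    refine ⟨hp.1.cons hwp, ?_⟩
    rw [SimpleGraph.Walk.edges_cons, List.mem_cons]
    rintro (hcontra | hmem)
    · rcases Sym2.eq_iff.mp hcontra with ⟨hh, -⟩ | ⟨hh, -⟩
      · exact h1.ne hh
      · exact hxy.ne hh
    · exact hwp (SimpleGraph.Walk.snd_mem_support_of_mem_edges p hmem)
  refine ⟨w, x, SimpleGraph.Walk.cons h1 (SimpleGraph.Walk.cons h2 p), hcyc', hw, fun z => ?_⟩
  simp only [SimpleGraph.Walk.support_cons, List.mem_cons]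
  constructor
  · rintro (rfl | rfl | hz)
    · exact Or.inl hxc
    · exact Or.inr rfl
    · exact Or.inl (hsup z hz)
  · rintro (hz | rfl)
    · have : z ∈ (SimpleGraph.Walk.cons hxy p).support := (hesup z).mpr ((hdsup z).mpr hz)
      simp only [SimpleGraph.Walk.support_cons, List.mem_cons] at this
      rcases this with rfl | hz'
      · exact Or.inl rfl
      · exact Or.inr (Or.inr hz')
    · exact Or.inr (Or.inl rfl)

lemma two_le_takeUntil [DecidableEq V] {u v z : V} (r : G.Walk u v) (hz : z ∈ r.support)
    (hne : u ≠ z) (hed : s(u, z) ∉ r.edges) : 2 ≤ (r.takeUntil z hz).length := by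
  by_contra hlt
  push_neg at hlt
  have : (r.takeUntil z hz).length = 0 ∨ (r.takeUntil z hz).length = 1 := by omega
  rcases this with h | h
  · exact hne (SimpleGraph.Walk.eq_of_length_eq_zero h)
  · exact hed (SimpleGraph.Walk.edges_takeUntil_subset r hz (edge_of_length_one_s12 _ h))

lemma two_le_dropUntil [DecidableEq V] {u v z : V} (r : G.Walk u v) (hz : z ∈ r.support)
    (hne : z ≠ v) (hed : s(z, v) ∉ r.edges) : 2 ≤ (r.dropUntil z hz).length := by
  by_contra hlt
  push_neg at hlt
  have : (r.dropUntil z hz).length = 0 ∨ (r.dropUntil z hz).length = 1 := by omega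
  rcases this with h | h
  · exact hne (SimpleGraph.Walk.eq_of_length_eq_zero h)
  · exact hed (SimpleGraph.Walk.edges_dropUntil_subset r hz (edge_of_length_one_s12 _ h))

end Helpers

/-- If `C` is a nonextendable cycle of a chordal graph `G`, `Q` a connected component
of `G − V(C)` and `S = N(Q)`, then no edge of `C` joins two vertices of `S`. -/
theorem stmt12 {V : Type*} (G : SimpleGraph V) (hch : Chordal G)
    {v : V} (c : G.Walk v v) (hc : c.IsCycle) (hne : ¬ CycleExtendable G c)
    (Q : Set V) (hQ : IsCompOf G {x | x ∈ c.support} Q)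
    (x y : V) (hx : x ∈ setNbhd G Q) (hy : y ∈ setNbhd G Q) :
    s(x, y) ∉ c.edges := by
  classical
  intro he
  obtain ⟨hdisj, hconnQ, hclosed⟩ := hQ
  obtain ⟨hxQ, a, haQ, hax⟩ := hx
  obtain ⟨hyQ, b, hbQ, hby⟩ := hy
  have hadj : G.Adj x y := c.adj_of_mem_edges he
  set T : Set V := Q ∪ {x, y} with hT
  have hxT : x ∈ T := Or.inr (by simp)
  have hyT : y ∈ T := Or.inr (by simp)
  set x' : T := ⟨x, hxT⟩ with hx'
  set y' : T := ⟨y, hyT⟩ with hy'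
  set H : SimpleGraph T := (G.induce T).deleteEdges {s(x', y')} with hH
  have hHadj : ∀ a b : T, H.Adj a b ↔ (G.Adj ↑a ↑b ∧ s(a, b) ≠ s(x', y')) := by
    intro a b
    rw [hH, SimpleGraph.deleteEdges_adj]
    simp [SimpleGraph.comap_adj]
  have hnotdel : ∀ a b : T, ((a : V) ∈ Q ∨ (b : V) ∈ Q) → s(a, b) ≠ s(x', y') := by
    intro a b hab hcontra
    rw [Sym2.eq_iff] at hcontra
    rcases hcontra with ⟨rfl, rfl⟩ | ⟨rfl, rfl⟩ <;> rcases hab with hq | hq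
    · exact hxQ hq
    · exact hyQ hq
    · exact hyQ hq
    · exact hxQ hq
  let f0 : G.induce Q →g H :=
    { toFun := fun q => ⟨↑q, Or.inl q.2⟩
      map_rel' := fun {q1 q2} hq => (hHadj _ _).mpr
        ⟨SimpleGraph.comap_adj.mp hq, hnotdel _ _ (Or.inl q1.2)⟩ }
  have hreach : H.Reachable x' y' := by
    have r1 : H.Adj x' ⟨a, Or.inl haQ⟩ :=
      (hHadj _ _).mpr ⟨hax.symm, hnotdel _ _ (Or.inr haQ)⟩
    have r2 : H.Adj ⟨b, Or.inl hbQ⟩ y' :=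
      (hHadj _ _).mpr ⟨hby, hnotdel _ _ (Or.inl hbQ)⟩
    have r3 : (G.induce Q).Reachable ⟨a, haQ⟩ ⟨b, hbQ⟩ := hconnQ.preconnected _ _
    exact r1.reachable.trans ((r3.map f0).trans r2.reachable)
  have hx'y' : x' ≠ y' := fun h => hadj.ne (congrArg Subtype.val h)
  obtain ⟨q, hqpath, hqlen⟩ := hreach.exists_path_of_dist
  have hq1 : q.length ≠ 0 := fun h => hx'y' (SimpleGraph.Walk.eq_of_length_eq_zero h)
  have hq2 : 2 ≤ q.length := by
    by_contra hcon
    have h1 : q.length = 1 := by omega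
    have hadjH := q.adj_of_mem_edges (edge_of_length_one_s12 q h1)
    exact ((hHadj _ _).mp hadjH).2 rfl
  rcases Nat.lt_or_ge q.length 3 with hlen3 | hlen3
  · -- middle vertex case : q has length 2
    have h2 : q.length = 2 := by omega
    obtain ⟨m, hm1, hm2⟩ := mid_of_length_two q h2
    rw [hHadj] at hm1 hm2
    have hmQ : (m : V) ∈ Q := by
      rcases m.2 with h | h
      · exact h
      · rcases h with h | h
        · exact absurd h hm1.1.ne'
        · exact absurd h hm2.1.ne
    have hwnc : (m : V) ∉ c.support := fun hcc => Set.disjoint_left.mp hdisj hmQ hcc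
    exact hne (extendable_of_adj c hc he hwnc hm1.1 hm2.1)
  · -- chord case : q has length ≥ 3
    let ι : H →g G := { toFun := Subtype.val, map_rel' := fun h => ((hHadj _ _).mp h).1 }
    let P : G.Walk x y := q.map ι
    have hPpath : P.IsPath := SimpleGraph.Walk.map_isPath_of_injective Subtype.val_injective hqpath
    have hPlen : P.length = q.length := SimpleGraph.Walk.length_map ι q
    have hPe : s(x, y) ∉ P.edges := by
      intro hm
      rw [SimpleGraph.Walk.edges_map, List.mem_map] at hm
      obtain ⟨e, heq, hme⟩ := hm
      have heqx : e = s(x', y') := by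
        apply Sym2.map.injective Subtype.val_injective
        exact hme.trans (by simp [Sym2.map_pair_eq, hx', hy'])
      rw [heqx] at heq
      exact ((hHadj _ _).mp (q.adj_of_mem_edges heq)).2 rfl
    have hDcyc : (SimpleGraph.Walk.cons hadj.symm P).IsCycle := by
      rw [SimpleGraph.Walk.cons_isCycle_iff]
      exact ⟨hPpath, by rwa [Sym2.eq_swap]⟩
    have hDlen : 4 ≤ (SimpleGraph.Walk.cons hadj.symm P).length := by
      rw [SimpleGraph.Walk.length_cons, hPlen]; omega
    obtain ⟨u, z, hu, hz, huz, hchord⟩ := hch _ hDcyc hDlen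
    have hyP : y ∈ P.support := P.end_mem_support
    have hu' : u ∈ P.support := by
      simp only [SimpleGraph.Walk.support_cons, List.mem_cons] at hu
      rcases hu with rfl | hu
      · exact hyP
      · exact hu
    have hz' : z ∈ P.support := by
      simp only [SimpleGraph.Walk.support_cons, List.mem_cons] at hz
      rcases hz with rfl | hz
      · exact hyP
      · exact hz
    have hlift : ∀ w ∈ P.support, ∃ w' : T, w' ∈ q.support ∧ (w' : V) = w := by
      intro w hw
      rw [SimpleGraph.Walk.support_map, List.mem_map] at hw
      obtain ⟨w', hw', hww⟩ := hw
      exact ⟨w', hw', hww⟩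
    obtain ⟨u', hu'q, rfl⟩ := hlift u hu'
    obtain ⟨z', hz'q, rfl⟩ := hlift z hz'
    have hchordq : s(u', z') ∉ q.edges := by
      intro hm
      apply hchord
      rw [SimpleGraph.Walk.edges_cons, List.mem_cons]
      right
      rw [SimpleGraph.Walk.edges_map, List.mem_map]
      exact ⟨s(u', z'), hm, rfl⟩
    have hadjH : H.Adj u' z' := by
      rw [hHadj]
      refine ⟨huz, fun hcontra => ?_⟩
      apply hchord
      have hval : s((u' : V), (z' : V)) = s(x, y) := by
        have := congrArg (Sym2.map (Subtype.val : T → V)) hcontra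
        simpa [Sym2.map_pair_eq] using this
      rw [SimpleGraph.Walk.edges_cons, List.mem_cons]
      left
      rw [hval, Sym2.eq_swap]
    have hts := q.take_spec hu'q
    have hlsplit : (q.takeUntil u' hu'q).length + (q.dropUntil u' hu'q).length = q.length := by
      have h := congrArg SimpleGraph.Walk.length hts
      rwa [SimpleGraph.Walk.length_append] at h
    have hzsplit : z' ∈ (q.takeUntil u' hu'q).support ∨ z' ∈ (q.dropUntil u' hu'q).support := by
      rw [← SimpleGraph.Walk.mem_support_append_iff, hts]; exact hz'q
    rcases hzsplit with hzt | hzd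
    · have h2le : 2 ≤ ((q.takeUntil u' hu'q).dropUntil z' hzt).length := by
        refine two_le_dropUntil _ hzt (fun h => hadjH.ne h.symm) (fun hm => hchordq ?_)
        have := SimpleGraph.Walk.edges_takeUntil_subset q hu'q hm
        rwa [Sym2.eq_swap] at this
      have hnew := SimpleGraph.dist_le (((q.takeUntil u' hu'q).takeUntil z' hzt).append
        (SimpleGraph.Walk.cons hadjH.symm (q.dropUntil u' hu'q)))
      rw [SimpleGraph.Walk.length_append, SimpleGraph.Walk.length_cons] at hnew
      have hsplit2 : ((q.takeUntil u' hu'q).takeUntil z' hzt).length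
          + ((q.takeUntil u' hu'q).dropUntil z' hzt).length = (q.takeUntil u' hu'q).length := by
        have h := congrArg SimpleGraph.Walk.length ((q.takeUntil u' hu'q).take_spec hzt)
        rwa [SimpleGraph.Walk.length_append] at h
      omega
    · have h2le : 2 ≤ ((q.dropUntil u' hu'q).takeUntil z' hzd).length :=
        two_le_takeUntil _ hzd hadjH.ne
          (fun hm => hchordq (SimpleGraph.Walk.edges_dropUntil_subset q hu'q hm))
      have hnew := SimpleGraph.dist_le ((q.takeUntil u' hu'q).append
        (SimpleGraph.Walk.cons hadjH ((q.dropUntil u' hu'q).dropUntil z' hzd)))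
      rw [SimpleGraph.Walk.length_append, SimpleGraph.Walk.length_cons] at hnew
      have hsplit2 : ((q.dropUntil u' hu'q).takeUntil z' hzd).length
          + ((q.dropUntil u' hu'q).dropUntil z' hzd).length = (q.dropUntil u' hu'q).length := by
        have h := congrArg SimpleGraph.Walk.length ((q.dropUntil u' hu'q).take_spec hzd)
        rwa [SimpleGraph.Walk.length_append] at h
      omega
end

section
/- The graph Ĥ defined as follows is strongly chordal: take a path a–b–c–d–e–f–g on 7 vertices, add three universal vertices u₁, u₂, u₃ (adjacent to all of a,…,g and to each other), and then add five new vertices v₁,…,v₅ with edges v₁a, v₁u₂, v₂u₂, v₂g, v₃b, v₃u₃, v₄u₃, v₄f, v₅e, v₅u₁. -/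
open SimpleGraph

/-- The edges of the graph `Ĥ`: vertices `a,…,g` of the path are `0,…,6`, the
universal vertices `u₁,u₂,u₃` are `7,8,9`, and the vertices `v₁,…,v₅` are `10,…,14`. -/
def hhatEdges : List (ℕ × ℕ) :=
  [(0, 1), (1, 2), (2, 3), (3, 4), (4, 5), (5, 6),
   (7, 0), (7, 1), (7, 2), (7, 3), (7, 4), (7, 5), (7, 6),
   (8, 0), (8, 1), (8, 2), (8, 3), (8, 4), (8, 5), (8, 6),
   (9, 0), (9, 1), (9, 2), (9, 3), (9, 4), (9, 5), (9, 6),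
   (7, 8), (7, 9), (8, 9),
   (10, 0), (10, 8), (11, 8), (11, 6), (12, 1), (12, 9), (13, 9), (13, 5),
   (14, 4), (14, 7)]

/-- The graph `Ĥ`: a path `a b c d e f g`, three universal vertices `u₁, u₂, u₃`,
and five degree-2 vertices `v₁,…,v₅` with the heavy edges
`v₁a, v₁u₂, v₂u₂, v₂g, v₃b, v₃u₃, v₄u₃, v₄f, v₅e, v₅u₁`. -/
def Hhat : SimpleGraph (Fin 15) :=
  SimpleGraph.fromRel (fun i j => (i.val, j.val) ∈ hhatEdges)

instance : DecidableRel Hhat.Adj := fun a b =>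
  inferInstanceAs (Decidable (a ≠ b ∧
    ((a.val, b.val) ∈ hhatEdges ∨ (b.val, a.val) ∈ hhatEdges)))

section AuxLemmas

/-! ### Decided combinatorial facts about `Hhat` -/

/-- The rank of a vertex in a perfect elimination ordering of `Ĥ`:
first the five simplicial vertices `v₁,…,v₅`, then the path `a,…,g`,
then the universal vertices. -/
def rk (v : Fin 15) : ℕ := if v.val ≤ 9 then v.val + 5 else v.val - 10

set_option maxHeartbeats 2000000 in
theorem rk_inj : ∀ a b : Fin 15, rk a = rk b → a = b := by decide

set_option maxHeartbeats 2000000 in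
theorem peo : ∀ a b : Fin 15, Hhat.Adj a b → rk a < rk b →
    ∀ c : Fin 15, Hhat.Adj a c → rk a < rk c → b ≠ c → Hhat.Adj b c := by decide

set_option maxHeartbeats 2000000 in
set_option synthInstance.maxSize 2000 in
set_option synthInstance.maxHeartbeats 2000000 in
set_option maxRecDepth 10000 in
theorem noK6 : ∀ a b : Fin 15, Hhat.Adj a b → ∀ c, Hhat.Adj a c → Hhat.Adj b c →
    ∀ d, Hhat.Adj a d → Hhat.Adj b d → Hhat.Adj c d →
    ∀ e, Hhat.Adj a e → Hhat.Adj b e → Hhat.Adj c e → Hhat.Adj d e →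
    ∀ f, Hhat.Adj a f → Hhat.Adj b f → Hhat.Adj c f → Hhat.Adj d f → Hhat.Adj e f →
    False := by decide

local notation "A" => Hhat.Adj

set_option maxHeartbeats 4000000 in
set_option synthInstance.maxSize 2000 in
set_option synthInstance.maxHeartbeats 2000000 in
set_option maxRecDepth 10000 in
theorem no3sun : ∀ y0 y1 : Fin 15, A y0 y1 → ∀ y2, A y0 y2 → A y1 y2 →
    ∀ x0, A x0 y0 → A x0 y1 → ¬A x0 y2 → x0 ≠ y2 →
    ∀ x1, A x1 y1 → A x1 y2 → ¬A x1 y0 → x1 ≠ y0 → x1 ≠ x0 → ¬A x0 x1 →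
    ∀ x2, A x2 y2 → A x2 y0 → ¬A x2 y1 → x2 ≠ y1 → x2 ≠ x0 → x2 ≠ x1 →
      ¬A x0 x2 → ¬A x1 x2 → False := by decide

set_option maxHeartbeats 4000000 in
set_option synthInstance.maxSize 2000 in
set_option synthInstance.maxHeartbeats 2000000 in
set_option maxRecDepth 10000 in
theorem no4sun : ∀ y0 y1 : Fin 15, A y0 y1 → ∀ y2, A y0 y2 → A y1 y2 →
    ∀ y3, A y0 y3 → A y1 y3 → A y2 y3 →
    ∀ x0, A x0 y0 → A x0 y1 → ¬A x0 y2 → ¬A x0 y3 → x0 ≠ y2 → x0 ≠ y3 →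
    ∀ x1, A x1 y1 → A x1 y2 → ¬A x1 y3 → ¬A x1 y0 → x1 ≠ y3 → x1 ≠ y0 →
      x1 ≠ x0 → ¬A x0 x1 →
    ∀ x2, A x2 y2 → A x2 y3 → ¬A x2 y0 → ¬A x2 y1 → x2 ≠ y0 → x2 ≠ y1 →
      x2 ≠ x0 → x2 ≠ x1 → ¬A x0 x2 → ¬A x1 x2 →
    ∀ x3, A x3 y3 → A x3 y0 → ¬A x3 y1 → ¬A x3 y2 → x3 ≠ y1 → x3 ≠ y2 →
      x3 ≠ x0 → x3 ≠ x1 → x3 ≠ x2 → ¬A x0 x3 → ¬A x1 x3 → ¬A x2 x3 → False := by decide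

set_option maxHeartbeats 4000000 in
set_option synthInstance.maxSize 2000 in
set_option synthInstance.maxHeartbeats 2000000 in
set_option maxRecDepth 10000 in
theorem no5sun : ∀ y0 y1 : Fin 15, A y0 y1 → ∀ y2, A y0 y2 → A y1 y2 →
    ∀ y3, A y0 y3 → A y1 y3 → A y2 y3 →
    ∀ y4, A y0 y4 → A y1 y4 → A y2 y4 → A y3 y4 →
    ∀ x0, A x0 y0 → A x0 y1 → ¬A x0 y2 → ¬A x0 y3 → ¬A x0 y4 →
      x0 ≠ y2 → x0 ≠ y3 → x0 ≠ y4 →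
    ∀ x1, A x1 y1 → A x1 y2 → ¬A x1 y3 → ¬A x1 y4 → ¬A x1 y0 →
      x1 ≠ y3 → x1 ≠ y4 → x1 ≠ y0 → x1 ≠ x0 → ¬A x0 x1 →
    ∀ x2, A x2 y2 → A x2 y3 → ¬A x2 y4 → ¬A x2 y0 → ¬A x2 y1 →
      x2 ≠ y4 → x2 ≠ y0 → x2 ≠ y1 → x2 ≠ x0 → x2 ≠ x1 → ¬A x0 x2 → ¬A x1 x2 →
    ∀ x3, A x3 y3 → A x3 y4 → ¬A x3 y0 → ¬A x3 y1 → ¬A x3 y2 →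
      x3 ≠ y0 → x3 ≠ y1 → x3 ≠ y2 → x3 ≠ x0 → x3 ≠ x1 → x3 ≠ x2 →
      ¬A x0 x3 → ¬A x1 x3 → ¬A x2 x3 →
    ∀ x4, A x4 y4 → A x4 y0 → ¬A x4 y1 → ¬A x4 y2 → ¬A x4 y3 →
      x4 ≠ y1 → x4 ≠ y2 → x4 ≠ y3 → x4 ≠ x0 → x4 ≠ x1 → x4 ≠ x2 → x4 ≠ x3 →
      ¬A x0 x4 → ¬A x1 x4 → ¬A x2 x4 → ¬A x3 x4 → False := by decide

/-! ### Generic walk lemmas -/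

namespace ChordalAux
variable {V : Type*} {G : SimpleGraph V}

lemma getVert_eq_support_get {u v : V} (p : G.Walk u v) {i : ℕ}
    (hi : i < p.support.length) : p.getVert i = p.support.get ⟨i, hi⟩ := by
  induction p generalizing i with
  | nil =>
    simp only [Walk.support_nil, List.length_singleton] at hi
    interval_cases i
    rfl
  | cons h q ih =>
    cases i with
    | zero => rfl
    | succ n =>
      simp only [Walk.support_cons, List.length_cons] at hi ⊢
      simpa [Walk.getVert_cons_succ] using ih (Nat.lt_of_succ_lt_succ hi)

lemma getVert_eq_tail_get {u : V} (c : G.Walk u u) {i : ℕ} (h1 : 1 ≤ i)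
    (h2 : i ≤ c.length) :
    c.getVert i = c.support.tail.get ⟨i - 1, by
      simp [List.length_tail, Walk.length_support]; omega⟩ := by
  have hb : i - 1 < c.support.tail.length := by
    simp [List.length_tail, Walk.length_support]; omega
  rw [List.get_tail _ _ hb]
  have : i - 1 + 1 = i := by omega
  simp_rw [this]
  exact getVert_eq_support_get c (by rw [Walk.length_support]; omega)

lemma cycle_getVert_injOn {u : V} {c : G.Walk u u} (hc : c.IsCycle)
    {i j : ℕ} (hi1 : 1 ≤ i) (hi2 : i ≤ c.length) (hj1 : 1 ≤ j) (hj2 : j ≤ c.length)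
    (h : c.getVert i = c.getVert j) : i = j := by
  rw [getVert_eq_tail_get c hi1 hi2, getVert_eq_tail_get c hj1 hj2] at h
  have := (hc.support_nodup.get_inj_iff).mp h
  have := Fin.mk.injEq _ _ _ _ ▸ this
  omega

lemma mem_edges_exists {u v : V} (p : G.Walk u v) {e : Sym2 V} (he : e ∈ p.edges) :
    ∃ i, i < p.length ∧ s(p.getVert i, p.getVert (i + 1)) = e := by
  induction p with
  | nil => simp at he
  | cons h q ih =>
    rw [Walk.edges_cons, List.mem_cons] at he
    rcases he with he | he
    · exact ⟨0, by simp, by simp [Walk.getVert_zero, Walk.getVert_cons_succ,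
        Walk.getVert_zero, he.symm]⟩
    · obtain ⟨i, hi, hEq⟩ := ih he
      exact ⟨i + 1, by simpa using Nat.succ_lt_succ hi, by
        simpa [Walk.getVert_cons_succ] using hEq⟩

lemma length_rotate [DecidableEq V] {u v : V} (c : G.Walk v v) (h : u ∈ c.support) :
    (c.rotate _ h).length = c.length := by
  have hp := (c.support_rotate _ h).perm.length_eq
  have h1 := Walk.length_support (c.rotate _ h)
  have h2 := Walk.length_support c
  have : c.support.tail.length = c.support.length - 1 := List.length_tail
  have : (c.rotate _ h).support.tail.length = (c.rotate _ h).support.length - 1 :=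
    List.length_tail
  omega

lemma start_mem_tail_support {u : V} (c : G.Walk u u) (hn : 1 ≤ c.length) :
    u ∈ c.support.tail := by
  have h := getVert_eq_tail_get c hn (le_refl c.length)
  rw [Walk.getVert_length] at h
  have hm := List.get_mem c.support.tail ⟨c.length - 1, by
    simp [List.length_tail, Walk.length_support]; omega⟩
  rwa [← h] at hm

lemma mem_support_iff_mem_tail {u z : V} (c : G.Walk u u) (hn : 1 ≤ c.length) :
    z ∈ c.support ↔ z ∈ c.support.tail := by
  rw [Walk.mem_support_iff]
  constructor
  · rintro (rfl | h)
    · exact start_mem_tail_support c hn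
    · exact h
  · exact Or.inr

end ChordalAux

/-! ### Chordality of `Ĥ` -/

open ChordalAux in
theorem hhat_chordal : Chordal Hhat := by
  intro v c hc hlen
  obtain ⟨m, hm⟩ : ∃ m, m ∈ c.support.argmin rk := by
    rcases h : c.support.argmin rk with _ | m
    · exact absurd (List.argmin_eq_none.mp h) (Walk.support_ne_nil c)
    · exact ⟨m, by simp [h]⟩
  have hmem : m ∈ c.support := List.argmin_mem hm
  have hmin : ∀ b ∈ c.support, rk m ≤ rk b := fun b hb => List.le_of_mem_argmin hb hm
  set c' := c.rotate _ hmem with hc'def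
  have hc' : c'.IsCycle := hc.rotate hmem
  have hlen' : c'.length = c.length := length_rotate c hmem
  have hn : 4 ≤ c'.length := hlen' ▸ hlen
  set n := c'.length with hndef
  set x := c'.getVert 1 with hxdef
  set y := c'.getVert (n - 1) with hydef
  have hmx : Hhat.Adj m x := by
    have := c'.adj_getVert_succ (i := 0) (by omega)
    simpa [Walk.getVert_zero] using this
  have hym : Hhat.Adj y m := by
    have := c'.adj_getVert_succ (i := n - 1) (by omega)
    have h2 : n - 1 + 1 = n := by omega
    rw [h2, hndef, Walk.getVert_length] at this
    exact this
  have hsupp : ∀ z, z ∈ c'.support ↔ z ∈ c.support := by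
    intro z
    rw [mem_support_iff_mem_tail c' (by omega), mem_support_iff_mem_tail c (by omega)]
    exact (c.support_rotate _ hmem).perm.mem_iff
  have hx_mem' : x ∈ c'.support :=
    Walk.mem_support_iff_exists_getVert.mpr ⟨1, rfl, by omega⟩
  have hy_mem' : y ∈ c'.support :=
    Walk.mem_support_iff_exists_getVert.mpr ⟨n - 1, rfl, by omega⟩
  have hx_mem : x ∈ c.support := (hsupp x).mp hx_mem'
  have hy_mem : y ∈ c.support := (hsupp y).mp hy_mem'
  have hm_eq : c'.getVert n = m := Walk.getVert_length c'
  have hxm : x ≠ m := fun h => by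
    have := cycle_getVert_injOn hc' (i := 1) (j := n) (by omega) (by omega) (by omega)
      (le_refl n) (h.trans hm_eq.symm)
    omega
  have hym' : y ≠ m := fun h => by
    have := cycle_getVert_injOn hc' (i := n - 1) (j := n) (by omega) (by omega) (by omega)
      (le_refl n) (h.trans hm_eq.symm)
    omega
  have hxy : x ≠ y := fun h => by
    have := cycle_getVert_injOn hc' (i := 1) (j := n - 1) (by omega) (by omega) (by omega)
      (by omega) h
    omega
  have hrx : rk m < rk x :=
    lt_of_le_of_ne (hmin x hx_mem) (fun h => hxm (rk_inj x m h.symm))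
  have hry : rk m < rk y :=
    lt_of_le_of_ne (hmin y hy_mem) (fun h => hym' (rk_inj y m h.symm))
  have hadj : Hhat.Adj x y := peo m x hmx hrx y hym.symm hry hxy
  refine ⟨x, y, hx_mem, hy_mem, hadj, fun hE => ?_⟩
  have hE' : s(x, y) ∈ c'.edges := ((c.rotate_edges _ hmem).mem_iff).mpr hE
  obtain ⟨i, hi, hEq⟩ := mem_edges_exists c' hE'
  rw [Sym2.eq_iff] at hEq
  rcases hEq with ⟨h1, h2⟩ | ⟨h1, h2⟩
  · have hi1 : 1 ≤ i := by
      rcases Nat.eq_zero_or_pos i with rfl | h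
      · exact absurd (by simpa [Walk.getVert_zero] using h1.symm) hxm
      · exact h
    have : i = 1 := cycle_getVert_injOn hc' hi1 (by omega) (by omega) (by omega)
      (h1.trans rfl)
    subst this
    have : (2 : ℕ) = n - 1 := cycle_getVert_injOn hc' (by omega) (by omega) (by omega)
      (by omega) (h2.trans rfl)
    omega
  · have : i + 1 = 1 := cycle_getVert_injOn hc' (by omega) (by omega) (by omega)
      (by omega) (h2.trans rfl)
    have hi0 : i = 0 := by omega
    subst hi0
    exact hym' (by simpa [Walk.getVert_zero] using h1.symm)

/-! ### Sun-freeness of `Ĥ` -/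

lemma sunAdj_rr {k : ℕ} {i j : Fin k} (h : i ≠ j) :
    (sunGraph k).Adj (Sum.inr i) (Sum.inr j) := by
  simp [sunGraph, sunRel, h]

lemma sunAdj_lr {k : ℕ} (i j : Fin k) :
    (sunGraph k).Adj (Sum.inl i) (Sum.inr j) ↔
      (j.val = i.val ∨ j.val = (i.val + 1) % k) := by
  simp [sunGraph, sunRel]

lemma sun_not_ll {k : ℕ} (i j : Fin k) :
    ¬(sunGraph k).Adj (Sum.inl i) (Sum.inl j) := by
  simp [sunGraph, sunRel]

theorem hhat_sunfree : ∀ k, 3 ≤ k → IsEmpty (sunGraph k ↪g Hhat) := by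
  intro k hk
  constructor
  intro f
  have hYY : ∀ i j : Fin k, i ≠ j → Hhat.Adj (f (Sum.inr i)) (f (Sum.inr j)) :=
    fun i j h => f.map_rel_iff.mpr (sunAdj_rr h)
  have hXY : ∀ i j : Fin k, (j.val = i.val ∨ j.val = (i.val + 1) % k) →
      Hhat.Adj (f (Sum.inl i)) (f (Sum.inr j)) :=
    fun i j h => f.map_rel_iff.mpr ((sunAdj_lr i j).mpr h)
  have hXYn : ∀ i j : Fin k, ¬(j.val = i.val ∨ j.val = (i.val + 1) % k) →
      ¬Hhat.Adj (f (Sum.inl i)) (f (Sum.inr j)) :=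
    fun i j h hadj => h ((sunAdj_lr i j).mp (f.map_rel_iff.mp hadj))
  have hXX : ∀ i j : Fin k, ¬Hhat.Adj (f (Sum.inl i)) (f (Sum.inl j)) :=
    fun i j hadj => sun_not_ll i j (f.map_rel_iff.mp hadj)
  have hneXY : ∀ i j : Fin k, f (Sum.inl i) ≠ f (Sum.inr j) :=
    fun i j h => Sum.inl_ne_inr (f.injective h)
  have hneXX : ∀ i j : Fin k, i ≠ j → f (Sum.inl i) ≠ f (Sum.inl j) :=
    fun i j h he => h (Sum.inl.inj (f.injective he))
  by_cases h6 : 6 ≤ k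
  · set g : Fin 6 → Fin 15 := fun i => f (Sum.inr ⟨i.val, lt_of_lt_of_le i.isLt h6⟩)
      with hg
    have hgadj : ∀ i j : Fin 6, i ≠ j → Hhat.Adj (g i) (g j) := fun i j h =>
      hYY _ _ (fun he => h (Fin.ext (by simpa using congrArg Fin.val he)))
    exact noK6 (g 0) (g 1) (hgadj 0 1 (by decide)) (g 2) (hgadj 0 2 (by decide))
      (hgadj 1 2 (by decide)) (g 3) (hgadj 0 3 (by decide)) (hgadj 1 3 (by decide))
      (hgadj 2 3 (by decide)) (g 4) (hgadj 0 4 (by decide)) (hgadj 1 4 (by decide))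
      (hgadj 2 4 (by decide)) (hgadj 3 4 (by decide)) (g 5) (hgadj 0 5 (by decide))
      (hgadj 1 5 (by decide)) (hgadj 2 5 (by decide)) (hgadj 3 5 (by decide))
      (hgadj 4 5 (by decide))
  · push_neg at h6
    interval_cases k
    · exact no3sun (f (.inr 0)) (f (.inr 1)) (hYY 0 1 (by decide))
        (f (.inr 2)) (hYY 0 2 (by decide)) (hYY 1 2 (by decide))
        (f (.inl 0)) (hXY 0 0 (by decide)) (hXY 0 1 (by decide)) (hXYn 0 2 (by decide))
          (hneXY 0 2)
        (f (.inl 1)) (hXY 1 1 (by decide)) (hXY 1 2 (by decide)) (hXYn 1 0 (by decide))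
          (hneXY 1 0) (hneXX 1 0 (by decide)) (hXX 0 1)
        (f (.inl 2)) (hXY 2 2 (by decide)) (hXY 2 0 (by decide)) (hXYn 2 1 (by decide))
          (hneXY 2 1) (hneXX 2 0 (by decide)) (hneXX 2 1 (by decide)) (hXX 0 2) (hXX 1 2)
    · exact no4sun (f (.inr 0)) (f (.inr 1)) (hYY 0 1 (by decide))
        (f (.inr 2)) (hYY 0 2 (by decide)) (hYY 1 2 (by decide))
        (f (.inr 3)) (hYY 0 3 (by decide)) (hYY 1 3 (by decide)) (hYY 2 3 (by decide))
        (f (.inl 0)) (hXY 0 0 (by decide)) (hXY 0 1 (by decide)) (hXYn 0 2 (by decide))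
          (hXYn 0 3 (by decide)) (hneXY 0 2) (hneXY 0 3)
        (f (.inl 1)) (hXY 1 1 (by decide)) (hXY 1 2 (by decide)) (hXYn 1 3 (by decide))
          (hXYn 1 0 (by decide)) (hneXY 1 3) (hneXY 1 0) (hneXX 1 0 (by decide)) (hXX 0 1)
        (f (.inl 2)) (hXY 2 2 (by decide)) (hXY 2 3 (by decide)) (hXYn 2 0 (by decide))
          (hXYn 2 1 (by decide)) (hneXY 2 0) (hneXY 2 1) (hneXX 2 0 (by decide))
          (hneXX 2 1 (by decide)) (hXX 0 2) (hXX 1 2)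
        (f (.inl 3)) (hXY 3 3 (by decide)) (hXY 3 0 (by decide)) (hXYn 3 1 (by decide))
          (hXYn 3 2 (by decide)) (hneXY 3 1) (hneXY 3 2) (hneXX 3 0 (by decide))
          (hneXX 3 1 (by decide)) (hneXX 3 2 (by decide)) (hXX 0 3) (hXX 1 3) (hXX 2 3)
    · exact no5sun (f (.inr 0)) (f (.inr 1)) (hYY 0 1 (by decide))
        (f (.inr 2)) (hYY 0 2 (by decide)) (hYY 1 2 (by decide))
        (f (.inr 3)) (hYY 0 3 (by decide)) (hYY 1 3 (by decide)) (hYY 2 3 (by decide))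
        (f (.inr 4)) (hYY 0 4 (by decide)) (hYY 1 4 (by decide)) (hYY 2 4 (by decide))
          (hYY 3 4 (by decide))
        (f (.inl 0)) (hXY 0 0 (by decide)) (hXY 0 1 (by decide)) (hXYn 0 2 (by decide))
          (hXYn 0 3 (by decide)) (hXYn 0 4 (by decide)) (hneXY 0 2) (hneXY 0 3) (hneXY 0 4)
        (f (.inl 1)) (hXY 1 1 (by decide)) (hXY 1 2 (by decide)) (hXYn 1 3 (by decide))
          (hXYn 1 4 (by decide)) (hXYn 1 0 (by decide)) (hneXY 1 3) (hneXY 1 4) (hneXY 1 0)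
          (hneXX 1 0 (by decide)) (hXX 0 1)
        (f (.inl 2)) (hXY 2 2 (by decide)) (hXY 2 3 (by decide)) (hXYn 2 4 (by decide))
          (hXYn 2 0 (by decide)) (hXYn 2 1 (by decide)) (hneXY 2 4) (hneXY 2 0) (hneXY 2 1)
          (hneXX 2 0 (by decide)) (hneXX 2 1 (by decide)) (hXX 0 2) (hXX 1 2)
        (f (.inl 3)) (hXY 3 3 (by decide)) (hXY 3 4 (by decide)) (hXYn 3 0 (by decide))
          (hXYn 3 1 (by decide)) (hXYn 3 2 (by decide)) (hneXY 3 0) (hneXY 3 1) (hneXY 3 2)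
          (hneXX 3 0 (by decide)) (hneXX 3 1 (by decide)) (hneXX 3 2 (by decide))
          (hXX 0 3) (hXX 1 3) (hXX 2 3)
        (f (.inl 4)) (hXY 4 4 (by decide)) (hXY 4 0 (by decide)) (hXYn 4 1 (by decide))
          (hXYn 4 2 (by decide)) (hXYn 4 3 (by decide)) (hneXY 4 1) (hneXY 4 2) (hneXY 4 3)
          (hneXX 4 0 (by decide)) (hneXX 4 1 (by decide)) (hneXX 4 2 (by decide))
          (hneXX 4 3 (by decide)) (hXX 0 4) (hXX 1 4) (hXX 2 4) (hXX 3 4)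

end AuxLemmas

/-- The graph `Ĥ` is strongly chordal. -/
theorem stmt15 : StronglyChordal Hhat := ⟨hhat_chordal, hhat_sunfree⟩
end
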